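/- arXiv:math/0410380 — 6 statements merged into one kernel-verified Lean document; each statement's English description precedes it below -/
import Mathlib

section
/- Let λ > 1 and j0 ∈ ℤ, and let (a_j)_{j ≥ j0} be a solution of the chain model on [0, ∞) with a_j(t) ≥ 0 for every j ≥ j0 and t ≥ 0. Assume that for every j > j0 the tail energy E_{B(j)}(t) = Σ_{l ≥ j} a_l(t)² is finite for every t ≥ 0 and is differentiable in t with d/dt E_{B(j)}(t) = 2 λ^j a_{j-1}(t)² a_j(t). Let q and ρ be real numbers with λ^{-2} < q < 1 and (λ² q)^{-1/2} < ρ < 1 (so that λ ρ √q > 1). Then there exists an integer J ≥ j0 + 1 such that for every integer j ≥ J and every t0 ≥ 0: if E_{B(j)}(t0) ≥ q^j, then there exists t ∈ [t0, t0 + ρ^j] with E_{B(j+1)}(t) ≥ q^{j+1}. -/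
/-- Monotonicity on `[s,t] ⊆ [0,∞)` from a nonnegative one-sided derivative. -/
private lemma chainModel_monoIcc {f f' : ℝ → ℝ} {s t : ℝ} (hs : 0 ≤ s)
    (hd : ∀ x ∈ Set.Icc s t, HasDerivWithinAt f (f' x) (Set.Ici 0) x)
    (h0 : ∀ x ∈ Set.Icc s t, 0 ≤ f' x) : MonotoneOn f (Set.Icc s t) := by
  have hsub : Set.Icc s t ⊆ Set.Ici 0 := fun y hy => le_trans hs hy.1
  have hsub' : Set.Ioo s t ⊆ Set.Ici 0 := fun y hy => le_trans hs hy.1.le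
  apply monotoneOn_of_hasDerivWithinAt_nonneg (convex_Icc s t) (f' := f')
  · exact fun x hx => ((hd x hx).mono hsub).continuousWithinAt
  · intro x hx
    rw [interior_Icc] at hx
    exact ((hd x (Set.Ioo_subset_Icc_self hx)).mono
      (by rw [interior_Icc]; exact hsub'))
  · intro x hx
    rw [interior_Icc] at hx
    exact h0 x (Set.Ioo_subset_Icc_self hx)

set_option maxHeartbeats 2000000 in
/-- Lemma 1 of the paper, generalized.
For the chain model `da_j/dt = λ^j a_{j-1}² − λ^{j+1} a_j a_{j+1}` (`j > j0`),
`da_{j0}/dt = −λ^{j0+1} a_{j0} a_{j0+1}`, with nonnegative solution on `[0,∞)`,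
finite tail energies `E_{B(j)}(t) = Σ_{l ≥ j} a_l(t)²` satisfying
`d/dt E_{B(j)} = 2 λ^j a_{j-1}² a_j`, and parameters `λ^{-2} < q < 1`,
`(λ² q)^{-1/2} < ρ < 1`: there is `J ≥ j0 + 1` such that for every `j ≥ J`
and `t0 ≥ 0`, if `E_{B(j)}(t0) ≥ q^j`, then `E_{B(j+1)}(t) ≥ q^{j+1}` for
some `t ∈ [t0, t0 + ρ^j]`. -/
theorem chainModel_tail_energy_propagation
    (lam : ℝ) (hlam : 1 < lam) (j0 : ℤ) (a : ℤ → ℝ → ℝ)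
    (hchain : ∀ j : ℤ, j0 < j → ∀ t : ℝ, 0 ≤ t →
      HasDerivWithinAt (a j)
        (lam ^ j * (a (j - 1) t) ^ 2 - lam ^ (j + 1) * a j t * a (j + 1) t)
        (Set.Ici 0) t)
    (hchain0 : ∀ t : ℝ, 0 ≤ t →
      HasDerivWithinAt (a j0) (-(lam ^ (j0 + 1) * a j0 t * a (j0 + 1) t))
        (Set.Ici 0) t)
    (hnonneg : ∀ j : ℤ, j0 ≤ j → ∀ t : ℝ, 0 ≤ t → 0 ≤ a j t)
    (E : ℤ → ℝ → ℝ)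
    (hE : ∀ j : ℤ, ∀ t : ℝ, E j t = ∑' l : ℕ, (a (j + l) t) ^ 2)
    (hsum : ∀ j : ℤ, j0 < j → ∀ t : ℝ, 0 ≤ t →
      Summable (fun l : ℕ => (a (j + l) t) ^ 2))
    (hEderiv : ∀ j : ℤ, j0 < j → ∀ t : ℝ, 0 ≤ t →
      HasDerivWithinAt (E j) (2 * lam ^ j * (a (j - 1) t) ^ 2 * a j t)
        (Set.Ici 0) t)
    (q ρ : ℝ) (hq1 : lam ^ (-2 : ℤ) < q) (hq2 : q < 1)
    (hρ1 : (Real.sqrt (lam ^ (2 : ℕ) * q))⁻¹ < ρ) (hρ2 : ρ < 1) :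
    ∃ J : ℤ, j0 + 1 ≤ J ∧ ∀ j : ℤ, J ≤ j → ∀ t0 : ℝ, 0 ≤ t0 →
      q ^ j ≤ E j t0 →
      ∃ t ∈ Set.Icc t0 (t0 + ρ ^ j), q ^ (j + 1) ≤ E (j + 1) t := by
  have hlam0 : (0:ℝ) < lam := by linarith
  have hq0 : (0:ℝ) < q := lt_trans (zpow_pos hlam0 _) hq1
  set s : ℝ := Real.sqrt q with hs_def
  have hs0 : 0 < s := Real.sqrt_pos.mpr hq0
  have hq_eq : s ^ (2:ℕ) = q := Real.sq_sqrt hq0.le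
  have hqs : ∀ m : ℤ, q ^ m = s ^ (2*m) := by
    intro m
    rw [← hq_eq, ← zpow_natCast s 2, ← zpow_mul]
    norm_num
  have hρ0 : 0 < ρ := lt_trans (by positivity) hρ1
  have hls : Real.sqrt (lam ^ (2:ℕ) * q) = lam * s := by
    rw [Real.sqrt_mul (by positivity), Real.sqrt_sq hlam0.le]
  have hr1 : 1 < lam * s * ρ := by
    rw [hls] at hρ1
    have h1 := mul_lt_mul_of_pos_left hρ1 (by positivity : (0:ℝ) < lam * s)
    rw [mul_inv_cancel₀ (by positivity : (lam*s) ≠ 0)] at h1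
    linarith [h1]
  set r : ℝ := lam * s * ρ with hr_def
  have hq2' : (0:ℝ) < 1 - q := by linarith
  obtain ⟨N, hN⟩ := pow_unbounded_of_one_lt
    (max (2/(lam^(2:ℤ)*s)) (2*s^(3:ℤ)/(1-q)^2)) hr1
  refine ⟨max (j0+1) (N:ℤ), le_max_left _ _, ?_⟩
  intro j hjJ t0 ht0 hEj0
  have hj1 : j0 < j := by
    have := le_trans (le_max_left (j0+1) (N:ℤ)) hjJ; linarith
  have hj2 : j0 < j + 1 := by linarith
  have hj3 : j0 < j + 2 := by linarith
  have hjN : (N:ℤ) ≤ j := le_trans (le_max_right _ _) hjJ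
  have hrj : max (2/(lam^(2:ℤ)*s)) (2*s^(3:ℤ)/(1-q)^2) < r ^ j := by
    refine lt_of_lt_of_le hN ?_
    rw [← zpow_natCast r N]
    exact zpow_le_zpow_right₀ hr1.le hjN
  set T : ℝ := ρ ^ j with hT_def
  clear_value T
  have hrj_expand : r ^ j = lam^j * s^j * T := by
    rw [hr_def, hT_def, mul_zpow, mul_zpow]
  have hT0 : 0 < T := by rw [hT_def]; exact zpow_pos hρ0 j
  set c : ℝ := lam^(j+1) * ((1-q) * q^j) with hc_def
  clear_value c
  set K : ℝ := lam^(j+2) * s^(j+1) with hK_def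
  clear_value K
  have hc0 : 0 < c := by
    rw [hc_def]
    exact mul_pos (zpow_pos hlam0 _) (mul_pos hq2' (zpow_pos hq0 _))
  have hK0 : 0 < K := by
    rw [hK_def]
    exact mul_pos (zpow_pos hlam0 _) (zpow_pos hs0 _)
  -- quantitative conditions
  have hBraw : 2/(lam^(2:ℤ)*s) ≤ r^j :=
    le_of_lt (lt_of_le_of_lt (le_max_left _ _) hrj)
  have hCraw : 2*s^(3:ℤ)/(1-q)^2 ≤ r^j :=
    le_of_lt (lt_of_le_of_lt (le_max_right _ _) hrj)
  have hB : 2 ≤ K * T := by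
    have hid : K * T = (lam^(2:ℤ)*s) * (lam^j*s^j*T) := by
      rw [hK_def, zpow_add₀ hlam0.ne' j 2, zpow_add₀ hs0.ne' j 1,
        zpow_one]
      ring
    have h2 := (div_le_iff₀ (by positivity : (0:ℝ) < lam^(2:ℤ)*s)).mp hBraw
    calc (2:ℝ) ≤ r^j * (lam^(2:ℤ)*s) := h2
      _ = (lam^(2:ℤ)*s) * (lam^j*s^j*T) := by rw [hrj_expand]; ring
      _ = K * T := hid.symm
  have hC : 2*K*q^(j+1) ≤ c^2*T := by
    have e_q : q = s*s := by rw [← hq_eq]; ring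
    have e_q_j : q^j = s^j * s^j := by
      rw [hqs j, two_mul, zpow_add₀ hs0.ne']
    have e_q_j1 : q^(j+1) = q^j * q := by
      rw [zpow_add₀ hq0.ne', zpow_one]
    have e_lam2 : lam^(j+2) = lam^j * (lam*lam) := by
      have h2l : lam^(2:ℤ) = lam*lam := by
        rw [show (2:ℤ) = 1+1 from rfl, zpow_add₀ hlam0.ne', zpow_one]
      rw [zpow_add₀ hlam0.ne' j 2, h2l]
    have e_lam1 : lam^(j+1) = lam^j * lam := by
      rw [zpow_add₀ hlam0.ne', zpow_one]
    have e_s1 : s^(j+1) = s^j * s := by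
      rw [zpow_add₀ hs0.ne', zpow_one]
    have e_s3 : s^(3:ℤ) = s*s*s := by
      rw [show ((3:ℤ)) = 1+1+1 by norm_num, zpow_add₀ hs0.ne',
        zpow_add₀ hs0.ne', zpow_one]
    have hid2 : c^2*T = ((1-q)^2/(2*s^(3:ℤ)) * (lam^j*s^j*T)) * (2*K*q^(j+1)) := by
      rw [hc_def, hK_def, e_q_j1, e_q_j, e_lam1, e_lam2, e_s1, e_s3]
      rw [e_q]
      field_simp
    have hcoef : 1 ≤ (1-q)^2/(2*s^(3:ℤ)) * (lam^j*s^j*T) := by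
      have h2s3 : (0:ℝ) < 2*s^(3:ℤ) := by positivity
      have h1q : (0:ℝ) < (1-q)^2 := by positivity
      have h5 := mul_le_mul_of_nonneg_left (hrj_expand ▸ hCraw)
        (le_of_lt (div_pos h1q h2s3))
      have h6 : ((1-q)^2/(2*s^(3:ℤ))) * (2*s^(3:ℤ)/(1-q)^2) = 1 := by
        field_simp
      linarith [h5, h6.symm.le]
    have hpos : (0:ℝ) < 2*K*q^(j+1) :=
      mul_pos (mul_pos two_pos hK0) (zpow_pos hq0 _)
    calc 2*K*q^(j+1) = 1 * (2*K*q^(j+1)) := (one_mul _).symm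
      _ ≤ ((1-q)^2/(2*s^(3:ℤ)) * (lam^j*s^j*T)) * (2*K*q^(j+1)) :=
        mul_le_mul_of_nonneg_right hcoef hpos.le
      _ = c^2*T := hid2.symm
  -- contradiction setup
  by_contra hcon
  push_neg at hcon
  set I : Set ℝ := Set.Icc t0 (t0 + T) with hI_def
  have hIci : ∀ x ∈ I, (0:ℝ) ≤ x := fun x hx => le_trans ht0 hx.1
  have hshift : ∀ j' : ℤ, j0 < j' → ∀ x : ℝ, 0 ≤ x →
      E j' x = a j' x ^ 2 + E (j'+1) x := by
    intro j' hj' x hx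
    rw [hE j' x, hE (j'+1) x, Summable.tsum_eq_zero_add (hsum j' hj' x hx)]
    congr 1
    · norm_num
    · exact tsum_congr fun n => by
        rw [show j' + ((n+1 : ℕ) : ℤ) = j' + 1 + (n:ℤ) by push_cast; ring]
  have hEnn : ∀ j' : ℤ, ∀ x : ℝ, 0 ≤ E j' x := fun j' x => by
    rw [hE]; exact tsum_nonneg fun l => sq_nonneg _
  have hfirst : ∀ j' : ℤ, j0 < j' → ∀ x : ℝ, 0 ≤ x → a j' x ^ 2 ≤ E j' x := by
    intro j' hj' x hx
    have h := hshift j' hj' x hx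
    have := hEnn (j'+1) x
    linarith
  have hEmono : MonotoneOn (E j) I :=
    chainModel_monoIcc ht0 (fun x hx => hEderiv j hj1 x (hIci x hx))
      (fun x hx => mul_nonneg (mul_nonneg (by positivity) (sq_nonneg _))
        (hnonneg j hj1.le x (hIci x hx)))
  have hq_split : (1-q)*q^j = q^j - q^(j+1) := by
    rw [zpow_add₀ hq0.ne' j 1, zpow_one]; ring
  have haj : ∀ x ∈ I, (1-q) * q^j ≤ a j x ^ 2 := by
    intro x hx
    have h1 : E j t0 ≤ E j x :=
      hEmono ⟨le_refl t0, by linarith [hT0]⟩ hx hx.1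
    have h2 := hcon x hx
    have h3 := hshift j hj1 x (hIci x hx)
    linarith [hq_split]
  have ha2 : ∀ x ∈ I, a (j+2) x ≤ s ^ (j+1) := by
    intro x hx
    have h1 : a (j+2) x ^2 ≤ E (j+2) x := hfirst (j+2) hj3 x (hIci x hx)
    have h2 : E (j+2) x ≤ E (j+1) x := by
      have := hshift (j+1) hj2 x (hIci x hx)
      have h2b : j + 1 + 1 = j + 2 := by ring
      rw [h2b] at this
      nlinarith [sq_nonneg (a (j+1) x)]
    have h3 := hcon x hx
    have h4 : q^(j+1) = (s^(j+1):ℝ)^(2:ℕ) := by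
      rw [hqs (j+1), pow_two, ← zpow_add₀ hs0.ne']
      congr 1; ring
    refine le_of_lt (lt_of_pow_lt_pow_left₀ 2 (zpow_pos hs0 _).le ?_)
    rw [← h4]
    linarith
  -- derivative of a (j+1)
  have hbd : ∀ x ∈ I, HasDerivWithinAt (a (j+1))
      (lam^(j+1) * a j x ^2 - lam^(j+2) * a (j+1) x * a (j+2) x)
      (Set.Ici 0) x := by
    intro x hx
    have h := hchain (j+1) hj2 x (hIci x hx)
    have e1 : j + 1 - 1 = j := by ring
    have e2 : j + 1 + 1 = j + 2 := by ring
    rw [e1, e2] at h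
    exact h
  -- the auxiliary function ψ
  have hψd : ∀ x ∈ I, HasDerivWithinAt
      (fun y => Real.exp (K*y) * (a (j+1) y - c/K))
      (Real.exp (K*x) * K * (a (j+1) x - c/K) +
        Real.exp (K*x) * (lam^(j+1) * a j x ^2 - lam^(j+2) * a (j+1) x * a (j+2) x))
      (Set.Ici 0) x := by
    intro x hx
    have h1 : HasDerivAt (fun y => Real.exp (K*y)) (Real.exp (K*x) * K) x := by
      have h2 : HasDerivAt (fun y : ℝ => K*y) K x := by
        simpa using (hasDerivAt_id x).const_mul K
      exact h2.exp
    exact (h1.hasDerivWithinAt).mul ((hbd x hx).sub_const (c/K))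
  have hψmono : MonotoneOn (fun y => Real.exp (K*y) * (a (j+1) y - c/K)) I := by
    apply chainModel_monoIcc ht0 hψd
    intro x hx
    have h1 := haj x hx
    have h2 := ha2 x hx
    have h3 : 0 ≤ a (j+1) x := hnonneg (j+1) (by linarith) x (hIci x hx)
    have hexp := Real.exp_pos (K*x)
    have e1 : c ≤ lam^(j+1) * a j x ^2 := by
      rw [hc_def]
      exact mul_le_mul_of_nonneg_left h1 (zpow_pos hlam0 _).le
    have e2 : lam^(j+2) * a (j+1) x * a (j+2) x ≤ K * a (j+1) x := by
      have h5 : lam^(j+2) * a (j+1) x * a (j+2) x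
          ≤ lam^(j+2) * a (j+1) x * s^(j+1) :=
        mul_le_mul_of_nonneg_left h2 (mul_nonneg (zpow_pos hlam0 _).le h3)
      calc lam^(j+2) * a (j+1) x * a (j+2) x
          ≤ lam^(j+2) * a (j+1) x * s^(j+1) := h5
        _ = K * a (j+1) x := by rw [hK_def]; ring
    have e3 : K * (a (j+1) x - c/K) = K * a (j+1) x - c := by
      field_simp
    have e4 : 0 ≤ K * (a (j+1) x - c/K) +
        (lam^(j+1) * a j x ^2 - lam^(j+2) * a (j+1) x * a (j+2) x) := by
      rw [e3]; linarith
    calc (0:ℝ) ≤ Real.exp (K*x) * (K * (a (j+1) x - c/K) +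
          (lam^(j+1) * a j x ^2 - lam^(j+2) * a (j+1) x * a (j+2) x)) :=
        mul_nonneg hexp.le e4
      _ = Real.exp (K*x) * K * (a (j+1) x - c/K) +
          Real.exp (K*x) * (lam^(j+1) * a j x ^2 -
            lam^(j+2) * a (j+1) x * a (j+2) x) := by ring
  have hτ0 : (0:ℝ) < 1/K := one_div_pos.mpr hK0
  have hτT : 1/K ≤ T/2 := by
    rw [div_le_div_iff₀ hK0 (by norm_num : (0:ℝ) < 2)]
    linarith [hB, mul_comm K T]
  -- lower bound for a(j+1) on the later part of the interval
  have hblow : ∀ x ∈ Set.Icc (t0 + 1/K) (t0 + T), c/(2*K) ≤ a (j+1) x := by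
    intro x hx
    have hxI : x ∈ I := ⟨by linarith [hx.1, hτ0], hx.2⟩
    have ht0I : t0 ∈ I := ⟨le_refl _, by linarith [hT0]⟩
    have hm := hψmono ht0I hxI (by linarith [hx.1, hτ0])
    simp only at hm
    have hb0 : 0 ≤ a (j+1) t0 := hnonneg (j+1) (by linarith) t0 ht0
    have hcK : 0 < c/K := div_pos hc0 hK0
    have h5 : Real.exp (K*t0 - K*x) ≤ 1/2 := by
      have h6 : K*t0 - K*x ≤ -1 := by
        have h7 : 1/K ≤ x - t0 := by linarith [hx.1]
        have h8 := mul_le_mul_of_nonneg_left h7 hK0.le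
        rw [mul_one_div, div_self hK0.ne'] at h8
        nlinarith
      calc Real.exp (K*t0-K*x) ≤ Real.exp (-1) := Real.exp_le_exp.mpr h6
        _ ≤ 1/2 := by
          rw [Real.exp_neg]
          have h2e : (2:ℝ) ≤ Real.exp 1 := by
            have := Real.add_one_le_exp (1:ℝ); linarith
          have h9 : (Real.exp 1)⁻¹ ≤ (2:ℝ)⁻¹ :=
            inv_anti₀ (by norm_num) h2e
          linarith [h9]
    have hfac : Real.exp (K*t0) = Real.exp (K*t0 - K*x) * Real.exp (K*x) := by
      rw [← Real.exp_add]; ring_nf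
    have hs1 : -(c/K) * (Real.exp (K*t0 - K*x) * Real.exp (K*x))
        ≤ Real.exp (K*x) * (a (j+1) x - c/K) := by
      rw [← hfac]
      calc -(c/K) * Real.exp (K*t0)
          ≤ Real.exp (K*t0) * (a (j+1) t0 - c/K) := by
            nlinarith [Real.exp_pos (K*t0)]
        _ ≤ _ := hm
    have hexpx := Real.exp_pos (K*x)
    have hexptx := Real.exp_pos (K*t0 - K*x)
    have hstep : (c/K)*(Real.exp (K*t0 - K*x)*Real.exp (K*x))
        ≤ (c/K)*((1/2)*Real.exp (K*x)) :=
      mul_le_mul_of_nonneg_left (mul_le_mul_of_nonneg_right h5 hexpx.le) hcK.le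
    have hs2 : Real.exp (K*x) * (-(1/2) * (c/K))
        ≤ Real.exp (K*x) * (a (j+1) x - c/K) := by
      linarith [hs1, hstep]
    have hs3 := le_of_mul_le_mul_left hs2 hexpx
    have hs4 : c/(2*K) = c/K - (1/2)*(c/K) := by ring
    linarith
  -- the function G and its monotonicity
  have ht0τ : 0 ≤ t0 + 1/K := by linarith [hτ0]
  have hsubI : Set.Icc (t0 + 1/K) (t0 + T) ⊆ I :=
    Set.Icc_subset_Icc (by linarith [hτ0]) le_rfl
  have hGd : ∀ x ∈ Set.Icc (t0 + 1/K) (t0 + T), HasDerivWithinAt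
      (fun t => E (j+1) t - c^2/K * t)
      (2*lam^(j+1)*(a j x)^2 * a (j+1) x - c^2/K) (Set.Ici 0) x := by
    intro x hx
    have h := hEderiv (j+1) hj2 x (le_trans ht0τ hx.1)
    have e1 : j + 1 - 1 = j := by ring
    rw [e1] at h
    have hlin : HasDerivWithinAt (fun t : ℝ => c^2/K * t) (c^2/K) (Set.Ici 0) x := by
      simpa using ((hasDerivAt_id x).const_mul (c^2/K)).hasDerivWithinAt
    exact h.sub hlin
  have hGmono : MonotoneOn (fun t => E (j+1) t - c^2/K * t)
      (Set.Icc (t0 + 1/K) (t0 + T)) := by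
    apply chainModel_monoIcc ht0τ hGd
    intro x hx
    have h1 := haj x (hsubI hx)
    have h2 := hblow x hx
    have hbnn : 0 ≤ a (j+1) x := hnonneg (j+1) (by linarith) x (le_trans ht0τ hx.1)
    have hL : (0:ℝ) < lam ^ (j+1) := zpow_pos hlam0 _
    have s1 : c * a (j+1) x ≤ lam^(j+1) * a j x ^2 * a (j+1) x := by
      apply mul_le_mul_of_nonneg_right _ hbnn
      rw [hc_def]
      exact mul_le_mul_of_nonneg_left h1 hL.le
    have s2 : c * (c/(2*K)) ≤ c * a (j+1) x :=
      mul_le_mul_of_nonneg_left h2 hc0.le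
    have s3 : c * (c/(2*K)) = c^2/K/2 := by
      field_simp
    linarith
  have hmemτ : t0 + 1/K ∈ Set.Icc (t0 + 1/K) (t0 + T) :=
    ⟨le_rfl, by linarith [hτT, hT0]⟩
  have hmemT : t0 + T ∈ Set.Icc (t0 + 1/K) (t0 + T) :=
    ⟨by linarith [hτT, hT0], le_rfl⟩
  have hG := hGmono hmemτ hmemT (by linarith [hτT, hT0])
  simp only at hG
  have hE2nn := hEnn (j+1) (t0+1/K)
  have hEbig : c^2/K * (T - 1/K) ≤ E (j+1) (t0+T) := by linarith [hG, hE2nn]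
  have h7 : q^(j+1) ≤ c^2/K * (T - 1/K) := by
    have h8 : c^2 * (1/K) ≤ c^2 * (T/2) :=
      mul_le_mul_of_nonneg_left hτT (sq_nonneg c)
    rw [div_mul_eq_mul_div, le_div_iff₀ hK0]
    linarith [hC, h8]
  have h9 := hcon (t0+T) ⟨by linarith [hT0], le_rfl⟩
  linarith
end

section
/- Let j0 ∈ ℤ and let (a_j)_{j ≥ j0} be a solution on [0, ∞) of the dyadic inviscid Burgers model da_j/dt = 2^j a_{j-1}² − 2^{j+1} a_j a_{j+1} for j > j0, da_{j0}/dt = −2^{j0+1} a_{j0} a_{j0+1}, with a_j(t) ≥ 0 for all j and t ≥ 0, and assume that for every j > j0 the tail energy E_{B(j)}(t) = Σ_{l ≥ j} a_l(t)² is finite for every t ≥ 0 and differentiable in t with d/dt E_{B(j)}(t) = 2 · 2^j a_{j-1}(t)² a_j(t). Then for every α > 0 and every q with max(1/4, 2^{-2α}) < q < 1, there exists an integer J0 such that: if E_{B(J)}(0) ≥ q^J for some integer J ≥ J0, then there exists a finite time T such that sup_{t ∈ [0, T]} Σ_{j ≥ j0} (1 + 2^{2αj}) a_j(t)² = +∞.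 In other words, the dyadic inviscid Burgers model exhibits finite-time blow-up of the H^α norm for every α > 0. -/
open scoped ENNReal

set_option maxHeartbeats 1000000

open Set

private lemma aux_mono {f : ℝ → ℝ} {f' : ℝ → ℝ} {s e : ℝ} (hs : 0 ≤ s)
    (hd : ∀ t : ℝ, 0 ≤ t → HasDerivWithinAt f (f' t) (Set.Ici 0) t)
    (h0 : ∀ t : ℝ, s < t → t < e → 0 ≤ f' t) :
    MonotoneOn f (Set.Icc s e) := by
  apply monotoneOn_of_deriv_nonneg (convex_Icc s e)
  · intro t ht
    exact ((hd t (hs.trans ht.1)).continuousWithinAt).mono (fun x hx => hs.trans hx.1)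
  · intro t ht
    rw [interior_Icc] at ht
    exact ((hd t (hs.trans ht.1.le)).hasDerivAt
      (Ici_mem_nhds (hs.trans_lt ht.1))).differentiableAt.differentiableWithinAt
  · intro t ht
    rw [interior_Icc] at ht
    rw [((hd t (hs.trans ht.1.le)).hasDerivAt (Ici_mem_nhds (hs.trans_lt ht.1))).deriv]
    exact h0 t ht.1 ht.2

private lemma key_step
    (j0 : ℤ) (a : ℤ → ℝ → ℝ) (E : ℤ → ℝ → ℝ) (q p : ℝ)
    (hchain : ∀ j : ℤ, j0 < j → ∀ t : ℝ, 0 ≤ t →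
      HasDerivWithinAt (a j)
        ((2 : ℝ) ^ j * (a (j - 1) t) ^ 2 - (2 : ℝ) ^ (j + 1) * a j t * a (j + 1) t)
        (Set.Ici 0) t)
    (hnonneg : ∀ j : ℤ, j0 ≤ j → ∀ t : ℝ, 0 ≤ t → 0 ≤ a j t)
    (hE : ∀ j : ℤ, ∀ t : ℝ, E j t = ∑' l : ℕ, (a (j + l) t) ^ 2)
    (hsum : ∀ j : ℤ, j0 < j → ∀ t : ℝ, 0 ≤ t →
      Summable (fun l : ℕ => (a (j + l) t) ^ 2))
    (hEderiv : ∀ j : ℤ, j0 < j → ∀ t : ℝ, 0 ≤ t →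
      HasDerivWithinAt (E j) (2 * (2 : ℝ) ^ j * (a (j - 1) t) ^ 2 * a j t)
        (Set.Ici 0) t)
    (hq14 : (1/4 : ℝ) < q) (hq2 : q < 1) (hp2 : p ^ 2 = q) (hp0 : 0 < p)
    (j : ℤ) (hj : j0 < j) (t0 : ℝ) (ht0 : 0 ≤ t0)
    (hEj : q ^ j ≤ E j t0) :
    q ^ (j + 1) ≤ E (j + 1) (t0 + (1/(4*p) + q*p/(1-q)^2) * (1/(2*p)) ^ j) := by
  have hq0 : 0 < q := lt_trans (by norm_num) hq14
  have h1q : (0:ℝ) < 1 - q := by linarith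
  set u : ℝ := p ^ j with hu_def
  set v : ℝ := (2:ℝ) ^ j with hv_def
  have hu0 : 0 < u := zpow_pos hp0 j
  have hv0 : 0 < v := zpow_pos two_pos j
  -- power identities
  have h2j1 : (2:ℝ) ^ (j+1) = v * 2 := zpow_add_one₀ two_ne_zero j
  have h2j2 : (2:ℝ) ^ (j+2) = v * 4 := by
    rw [show j + 2 = (j+1) + 1 by ring, zpow_add_one₀ two_ne_zero, h2j1]; ring
  have hpj1 : p ^ (j+1) = u * p := zpow_add_one₀ hp0.ne' j
  have hqj : q ^ j = u ^ 2 := by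
    rw [← hp2, hu_def, ← zpow_natCast p 2, ← zpow_mul, mul_comm, zpow_mul, zpow_natCast]
  have hqj1 : q ^ (j+1) = u ^ 2 * q := by
    rw [zpow_add_one₀ hq0.ne' j, hqj]

  have hwj : (1/(2*p)) ^ j = (v * u)⁻¹ := by
    rw [one_div, inv_zpow, mul_zpow]
  set s : ℝ := p ^ (j+1) with hs_def
  have hs0 : 0 < s := zpow_pos hp0 _
  have hsup : s = u * p := hpj1
  have hs2 : s ^ 2 = q ^ (j+1) := by
    rw [hsup, hqj1, ← hp2]; ring
  set A : ℝ := (2:ℝ) ^ (j+1) * (q ^ j * (1 - q)) with hA_def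
  set B : ℝ := (2:ℝ) ^ (j+2) * s with hB_def
  set m : ℝ := A / (2 * B) with hm_def
  set K : ℝ := (2:ℝ) ^ (j+2) * (q ^ j * (1 - q)) * m with hK_def
  have hA0 : 0 < A := by
    rw [hA_def, h2j1, hqj]; positivity
  have hB0 : 0 < B := by
    rw [hB_def, h2j2]; positivity
  have hm0 : 0 < m := by rw [hm_def]; positivity
  have hK0 : 0 < K := by
    rw [hK_def, h2j2, hqj]; positivity
  set D : ℝ := (1/(4*p) + q*p/(1-q)^2) * (1/(2*p)) ^ j with hD_def
  -- the master algebraic identity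
  have hDeq : D = 1 / B + q ^ (j+1) / K := by
    rw [hD_def, hwj, hK_def, hm_def, hA_def, hB_def, h2j1, h2j2, hsup, hqj, hqj1]
    field_simp
  by_contra hlt
  push_neg at hlt
  set t1 : ℝ := t0 + D with ht1_def
  have hD0 : 0 < D := by rw [hDeq]; positivity
  have ht01 : t0 ≤ t1 := by rw [ht1_def]; linarith
  have hEnn : ∀ i : ℤ, ∀ t : ℝ, 0 ≤ E i t := fun i t => by
    rw [hE]; exact tsum_nonneg fun l => sq_nonneg _
  have hsplit : ∀ i : ℤ, j0 < i → ∀ t : ℝ, 0 ≤ t → E i t = a i t ^ 2 + E (i+1) t := by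
    intro i hi t ht
    rw [hE, hE, Summable.tsum_eq_zero_add (hsum i hi t ht)]
    congr 1
    · norm_num
    · exact tsum_congr fun l => by
        rw [show i + (((l:ℕ)+1 : ℕ) : ℤ) = i + 1 + (l:ℕ) by push_cast; ring]
  have hfirst : ∀ i : ℤ, j0 < i → ∀ t : ℝ, 0 ≤ t → a i t ^ 2 ≤ E i t := by
    intro i hi t ht
    have h := Summable.le_tsum (hsum i hi t ht) 0 (fun l _ => sq_nonneg _)
    rw [hE]
    simpa using h
  have hEmono : ∀ i : ℤ, j0 < i → ∀ x y : ℝ, 0 ≤ x → MonotoneOn (E i) (Set.Icc x y) := by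
    intro i hi x y hx
    apply aux_mono hx (fun t ht => hEderiv i hi t ht)
    intro t hxt _
    have ht : 0 ≤ t := le_trans hx hxt.le
    have h1 := hnonneg i (le_of_lt hi) t ht
    have h2 : (0:ℝ) ≤ 2 * (2:ℝ) ^ i := by positivity
    exact mul_nonneg (mul_nonneg h2 (sq_nonneg _)) h1
  have hEjt : ∀ t ∈ Set.Icc t0 t1, q ^ j ≤ E j t := by
    intro t ht
    exact le_trans hEj (hEmono j hj t0 t1 ht0 ⟨le_refl t0, ht01⟩ ht ht.1)
  have hEj1t : ∀ t ∈ Set.Icc t0 t1, E (j+1) t ≤ q ^ (j+1) := by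
    intro t ht
    have h := hEmono (j+1) (by omega) t0 t1 ht0 ht ⟨ht01, le_refl t1⟩ ht.2
    exact le_of_lt (lt_of_le_of_lt h hlt)
  have haj : ∀ t ∈ Set.Icc t0 t1, q ^ j * (1 - q) ≤ a j t ^ 2 := by
    intro t ht
    have ht' : 0 ≤ t := le_trans ht0 ht.1
    have h1 := hsplit j hj t ht'
    have h2 := hEjt t ht
    have h3 := hEj1t t ht
    rw [zpow_add_one₀ hq0.ne' j] at h3
    have hring : q ^ j * (1 - q) = q ^ j - q ^ j * q := by ring
    linarith
  have ha2s : ∀ t ∈ Set.Icc t0 t1, a (j+2) t ≤ s := by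
    intro t ht
    have ht' : 0 ≤ t := le_trans ht0 ht.1
    have h1 : a (j+2) t ^ 2 ≤ E (j+2) t := hfirst (j+2) (by omega) t ht'
    have h2 := hsplit (j+1) (by omega) t ht'
    rw [show j+1+1 = j+2 by ring] at h2
    have h3 := hEj1t t ht
    have h4 : a (j+2) t ^ 2 ≤ s ^ 2 := by rw [hs2]; nlinarith [sq_nonneg (a (j+1) t)]
    have h5 := Real.sqrt_le_sqrt h4
    rwa [Real.sqrt_sq (hnonneg (j+2) (by omega) t ht'), Real.sqrt_sq hs0.le] at h5
  have hb0 : ∀ t : ℝ, 0 ≤ t → 0 ≤ a (j+1) t := hnonneg (j+1) (by omega)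
  set c : ℝ → ℝ := fun t => (A/B) * (1 - Real.exp (-B*(t - t0))) with hc_def
  set z : ℝ → ℝ := fun t => Real.exp (B*t) * (c t - a (j+1) t) with hz_def
  have hacont : ContinuousOn (a (j+1)) (Set.Icc t0 t1) := fun t ht =>
    ((hchain (j+1) (by omega) t (le_trans ht0 ht.1)).continuousWithinAt).mono
      (fun x hx => le_trans ht0 hx.1)
  have hzD : ∀ t ∈ Set.Ioo t0 t1, HasDerivAt z
      ((Real.exp (B*t) * B) * (c t - a (j+1) t) +
        Real.exp (B*t) * ((A * Real.exp (-B*(t - t0))) -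
          ((2:ℝ) ^ (j+1) * a j t ^ 2 - (2:ℝ) ^ (j+2) * a (j+1) t * a (j+2) t))) t := by
    intro t ht
    have ht' : (0:ℝ) < t := lt_of_le_of_lt ht0 ht.1
    have hmem : Set.Ici (0:ℝ) ∈ nhds t := Ici_mem_nhds ht'
    have hb' : HasDerivAt (a (j+1))
        ((2:ℝ) ^ (j+1) * a j t ^ 2 - (2:ℝ) ^ (j+2) * a (j+1) t * a (j+2) t) t := by
      have h := (hchain (j+1) (by omega) t ht'.le).hasDerivAt hmem
      rw [show j+1-1 = j by ring, show j+1+1 = j+2 by ring] at h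
      exact h
    have hlin : HasDerivAt (fun t : ℝ => -B*(t - t0)) (-B) t := by
      simpa using HasDerivAt.const_mul (-B) ((hasDerivAt_id t).sub_const t0)
    have hc' : HasDerivAt c (A * Real.exp (-B*(t - t0))) t := by
      have h := HasDerivAt.const_mul (A/B) ((hlin.exp).const_sub 1)
      convert h using 1
      · rfl
      · rfl
      have hBne : B ≠ 0 := hB0.ne'
      field_simp
    have hexp2 : HasDerivAt (fun t : ℝ => Real.exp (B*t)) (Real.exp (B*t) * B) t := by
      simpa using (HasDerivAt.const_mul B (hasDerivAt_id t)).exp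
    exact hexp2.mul (hc'.sub hb')
  have hzanti : AntitoneOn z (Set.Icc t0 t1) := by
    apply antitoneOn_of_deriv_nonpos (convex_Icc t0 t1)
    · apply ContinuousOn.mul
      · exact (Real.continuous_exp.comp (continuous_const.mul continuous_id)).continuousOn
      · exact ((Continuous.continuousOn (by fun_prop))).sub hacont
    · intro t ht
      rw [interior_Icc] at ht
      exact (hzD t ht).differentiableAt.differentiableWithinAt
    · intro t ht
      rw [interior_Icc] at ht
      rw [(hzD t ht).deriv]
      have htI : t ∈ Set.Icc t0 t1 := ⟨ht.1.le, ht.2.le⟩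
      have ht' : 0 ≤ t := le_trans ht0 ht.1.le
      have h1 : A * Real.exp (-B*(t - t0)) + B * c t = A := by
        simp only [hc_def]
        field_simp
        ring
      have h2 : A ≤ B * a (j+1) t +
          ((2:ℝ) ^ (j+1) * a j t ^ 2 - (2:ℝ) ^ (j+2) * a (j+1) t * a (j+2) t) := by
        have e1 := haj t htI
        have e2 := ha2s t htI
        have e3 := hb0 t ht'
        have h2j1' : (0:ℝ) < (2:ℝ) ^ (j+1) := zpow_pos two_pos _
        have h2j2' : (0:ℝ) < (2:ℝ) ^ (j+2) := zpow_pos two_pos _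
        rw [hA_def, hB_def]
        have hint1 := mul_le_mul_of_nonneg_left e1 h2j1'.le
        have hint2 : (2:ℝ) ^ (j+2) * a (j+1) t * a (j+2) t ≤
            (2:ℝ) ^ (j+2) * s * a (j+1) t := by
          calc (2:ℝ) ^ (j+2) * a (j+1) t * a (j+2) t
              = ((2:ℝ) ^ (j+2) * a (j+1) t) * a (j+2) t := by ring
            _ ≤ ((2:ℝ) ^ (j+2) * a (j+1) t) * s :=
                mul_le_mul_of_nonneg_left e2 (mul_nonneg h2j2'.le e3)
            _ = (2:ℝ) ^ (j+2) * s * a (j+1) t := by ring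
        linarith
      have hfinal : (Real.exp (B*t) * B) * (c t - a (j+1) t) +
          Real.exp (B*t) * ((A * Real.exp (-B*(t - t0))) -
            ((2:ℝ) ^ (j+1) * a j t ^ 2 - (2:ℝ) ^ (j+2) * a (j+1) t * a (j+2) t)) =
          Real.exp (B*t) * ((A * Real.exp (-B*(t - t0)) + B * c t) -
            (B * a (j+1) t +
              ((2:ℝ) ^ (j+1) * a j t ^ 2 - (2:ℝ) ^ (j+2) * a (j+1) t * a (j+2) t))) := by
        ring
      rw [hfinal, h1]
      exact mul_nonpos_of_nonneg_of_nonpos (Real.exp_nonneg _) (by linarith)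
  have hclow : ∀ t ∈ Set.Icc t0 t1, c t ≤ a (j+1) t := by
    intro t ht
    have hz1 : z t ≤ z t0 := hzanti ⟨le_refl t0, ht01⟩ ht ht.1
    have hz0 : z t0 ≤ 0 := by
      have hc0 : c t0 = 0 := by simp [hc_def]
      have : z t0 = Real.exp (B*t0) * (c t0 - a (j+1) t0) := rfl
      rw [this, hc0]
      exact mul_nonpos_of_nonneg_of_nonpos (Real.exp_nonneg _) (by linarith [hb0 t0 ht0])
    have hz2 : Real.exp (B*t) * (c t - a (j+1) t) ≤ 0 := le_trans hz1 hz0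
    have hzp := Real.exp_pos (B*t)
    nlinarith [hzp, hz2]
  have hiB : (0:ℝ) < 1/B := by positivity
  have ht0B : t0 + 1/B ≤ t1 := by
    have h : (0:ℝ) < q ^ (j+1) / K := by positivity
    rw [ht1_def, hDeq]
    linarith
  have hmlow : ∀ t ∈ Set.Icc (t0 + 1/B) t1, m ≤ a (j+1) t := by
    intro t ht
    have htI : t ∈ Set.Icc t0 t1 := ⟨by linarith [ht.1], ht.2⟩
    have h1 : 1 ≤ B * (t - t0) := by
      have h0 : 1/B ≤ t - t0 := by linarith [ht.1]
      calc (1:ℝ) = B * (1/B) := by field_simp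
      _ ≤ B * (t - t0) := mul_le_mul_of_nonneg_left h0 hB0.le
    have h2 : Real.exp (-B*(t - t0)) ≤ 1/2 := by
      have e1 : Real.exp (-B*(t - t0)) ≤ Real.exp (-1) := by
        apply Real.exp_le_exp.mpr; linarith
      have h3 : (2:ℝ) ≤ Real.exp 1 := by
        have := Real.add_one_le_exp 1; linarith
      have e2 : Real.exp (-1) ≤ 1/2 := by
        rw [Real.exp_neg]
        have := one_div_le_one_div_of_le two_pos h3
        rw [one_div (Real.exp 1)] at this
        linarith
      linarith
    have h4 : m ≤ c t := by
      have hAB : (0:ℝ) ≤ A/B := by positivity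
      have h5 : (A/B) * (1/2) ≤ (A/B) * (1 - Real.exp (-B*(t - t0))) :=
        mul_le_mul_of_nonneg_left (by linarith) hAB
      have hm' : m = (A/B) * (1/2) := by rw [hm_def]; ring
      show m ≤ (A/B) * (1 - Real.exp (-B*(t - t0)))
      linarith
    exact le_trans h4 (hclow t htI)
  have hmono2 : MonotoneOn (fun t => E (j+1) t - K * t) (Set.Icc (t0 + 1/B) t1) := by
    apply aux_mono (by linarith)
      (f' := fun t => 2 * (2:ℝ) ^ (j+1) * a (j+1-1) t ^ 2 * a (j+1) t - K)
    · intro t ht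
      exact (hEderiv (j+1) (by omega) t ht).sub
        (by simpa using HasDerivWithinAt.const_mul K (hasDerivWithinAt_id t (Set.Ici 0)))
    · intro t h1 h2
      have htI2 : t ∈ Set.Icc (t0 + 1/B) t1 := ⟨h1.le, h2.le⟩
      have htI : t ∈ Set.Icc t0 t1 := ⟨by linarith, h2.le⟩
      have ht' : 0 ≤ t := le_trans ht0 htI.1
      have e1 := haj t htI
      have e2 := hmlow t htI2
      have h22 : 2 * (2:ℝ) ^ (j+1) = (2:ℝ) ^ (j+2) := by rw [h2j1, h2j2]; ring
      have hqj0 : (0:ℝ) < q ^ j * (1 - q) := by rw [hqj]; positivity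
      rw [show j+1-1 = j by ring, h22, hK_def]
      have e3 : (q ^ j * (1 - q)) * m ≤ a j t ^ 2 * a (j+1) t :=
        mul_le_mul e1 e2 hm0.le (sq_nonneg _)
      have h2j2' : (0:ℝ) < (2:ℝ) ^ (j+2) := zpow_pos two_pos _
      have hint : (2:ℝ) ^ (j+2) * (q ^ j * (1 - q)) * m ≤
          (2:ℝ) ^ (j+2) * a j t ^ 2 * a (j+1) t := by
        calc (2:ℝ) ^ (j+2) * (q ^ j * (1 - q)) * m
            = (2:ℝ) ^ (j+2) * ((q ^ j * (1 - q)) * m) := by ring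
          _ ≤ (2:ℝ) ^ (j+2) * (a j t ^ 2 * a (j+1) t) :=
              mul_le_mul_of_nonneg_left e3 h2j2'.le
          _ = (2:ℝ) ^ (j+2) * a j t ^ 2 * a (j+1) t := by ring
      linarith
  have hfin := hmono2 ⟨le_refl _, ht0B⟩ ⟨ht0B, le_refl t1⟩ ht0B
  simp only [] at hfin
  have hEnn1 := hEnn (j+1) (t0 + 1/B)
  have hKD : K * (D - 1/B) = q ^ (j+1) := by
    rw [hDeq]
    field_simp
    ring
  have h6 : K * t1 - K * (t0 + 1/B) = q ^ (j+1) := by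
    rw [ht1_def, ← hKD]; ring
  linarith

/-- The dyadic inviscid Burgers model
`da_j/dt = 2^j a_{j-1}² − 2^{j+1} a_j a_{j+1}` (`j > j0`),
`da_{j0}/dt = −2^{j0+1} a_{j0} a_{j0+1}`, with nonnegative solution and
tail energies `E_{B(j)}` finite and satisfying
`d/dt E_{B(j)} = 2·2^j a_{j-1}² a_j`, exhibits finite-time blow-up of the
`H^α` norm for every `α > 0`: for every `q` with
`max(1/4, 2^{-2α}) < q < 1` there is `J0` such that if `E_{B(J)}(0) ≥ q^J`
for some `J ≥ J0`, then `sup_{t ∈ [0,T]} Σ_{j ≥ j0} (1 + 2^{2αj}) a_j(t)² = ∞`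
for some finite time `T`. -/
theorem dyadicBurgers_finite_time_blowup
    (j0 : ℤ) (a : ℤ → ℝ → ℝ)
    (hchain : ∀ j : ℤ, j0 < j → ∀ t : ℝ, 0 ≤ t →
      HasDerivWithinAt (a j)
        ((2 : ℝ) ^ j * (a (j - 1) t) ^ 2 - (2 : ℝ) ^ (j + 1) * a j t * a (j + 1) t)
        (Set.Ici 0) t)
    (hchain0 : ∀ t : ℝ, 0 ≤ t →
      HasDerivWithinAt (a j0) (-((2 : ℝ) ^ (j0 + 1) * a j0 t * a (j0 + 1) t))
        (Set.Ici 0) t)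
    (hnonneg : ∀ j : ℤ, j0 ≤ j → ∀ t : ℝ, 0 ≤ t → 0 ≤ a j t)
    (E : ℤ → ℝ → ℝ)
    (hE : ∀ j : ℤ, ∀ t : ℝ, E j t = ∑' l : ℕ, (a (j + l) t) ^ 2)
    (hsum : ∀ j : ℤ, j0 < j → ∀ t : ℝ, 0 ≤ t →
      Summable (fun l : ℕ => (a (j + l) t) ^ 2))
    (hEderiv : ∀ j : ℤ, j0 < j → ∀ t : ℝ, 0 ≤ t →
      HasDerivWithinAt (E j) (2 * (2 : ℝ) ^ j * (a (j - 1) t) ^ 2 * a j t)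
        (Set.Ici 0) t)
    (α : ℝ) (hα : 0 < α)
    (q : ℝ) (hq1 : max (1 / 4 : ℝ) ((2 : ℝ) ^ (-(2 * α))) < q) (hq2 : q < 1) :
    ∃ J0 : ℤ, j0 ≤ J0 ∧ ∀ J : ℤ, J0 ≤ J → q ^ J ≤ E J 0 →
      ∃ T : ℝ, 0 < T ∧
        (⨆ t ∈ Set.Icc (0 : ℝ) T,
          ∑' l : ℕ, ENNReal.ofReal
            ((1 + (2 : ℝ) ^ (2 * α * ((j0 : ℝ) + (l : ℝ)))) * (a (j0 + l) t) ^ 2))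
          = (⊤ : ℝ≥0∞) := by
  have hq14 : (1/4 : ℝ) < q := lt_of_le_of_lt (le_max_left _ _) hq1
  have hqa : (2:ℝ) ^ (-(2*α)) < q := lt_of_le_of_lt (le_max_right _ _) hq1
  have hq0 : (0:ℝ) < q := by linarith
  set p : ℝ := Real.sqrt q with hp_def
  have hp0 : 0 < p := Real.sqrt_pos.mpr hq0
  have hp2 : p ^ 2 = q := Real.sq_sqrt hq0.le
  have hphalf : (1/2 : ℝ) < p := by nlinarith
  set w : ℝ := 1/(2*p) with hw_def
  have hw0 : 0 < w := by positivity
  have hw1 : w < 1 := by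
    rw [hw_def, div_lt_one (by positivity)]; linarith
  set Cq : ℝ := 1/(4*p) + q*p/(1-q)^2 with hCq_def
  have h1q : (0:ℝ) < 1 - q := by linarith
  have hCq0 : 0 < Cq := by positivity
  have hkey : ∀ j : ℤ, j0 < j → ∀ t0 : ℝ, 0 ≤ t0 → q ^ j ≤ E j t0 →
      q ^ (j+1) ≤ E (j+1) (t0 + Cq * w ^ j) :=
    fun j hj t0 ht0 h =>
      key_step j0 a E q p hchain hnonneg hE hsum hEderiv hq14 hq2 hp2 hp0 j hj t0 ht0 h
  refine ⟨j0 + 1, by omega, ?_⟩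
  intro J hJ hEJ0
  set tk : ℕ → ℝ := fun k => ∑ i ∈ Finset.range k, Cq * w ^ (J + (i:ℤ)) with htk_def
  have htk0 : ∀ k, 0 ≤ tk k := fun k =>
    Finset.sum_nonneg (fun i _ => by positivity)
  have hiter : ∀ k : ℕ, q ^ (J + (k:ℤ)) ≤ E (J + (k:ℤ)) (tk k) := by
    intro k
    induction k with
    | zero => simpa [htk_def] using hEJ0
    | succ k ih =>
      have hjk : j0 < J + (k:ℤ) := by omega
      have h := hkey (J + (k:ℤ)) hjk (tk k) (htk0 k) ih
      have htkk : tk (k+1) = tk k + Cq * w ^ (J + (k:ℤ)) := Finset.sum_range_succ _ k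
      rw [show J + ((k+1 : ℕ) : ℤ) = J + (k:ℤ) + 1 by push_cast; ring, htkk]
      exact h
  set T : ℝ := Cq * w ^ J * (1 - w)⁻¹ with hT_def
  have hwJ0 : (0:ℝ) < w ^ J := zpow_pos hw0 J
  have hT0 : 0 < T :=
    mul_pos (mul_pos hCq0 hwJ0) (inv_pos.mpr (by linarith))
  have htkT : ∀ k, tk k ≤ T := by
    intro k
    have h1 : ∀ i : ℕ, Cq * w ^ (J + (i:ℤ)) = Cq * w ^ J * w ^ i := by
      intro i
      rw [zpow_add₀ (ne_of_gt hw0), zpow_natCast]; ring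
    calc tk k = ∑ i ∈ Finset.range k, Cq * w ^ J * w ^ i :=
          Finset.sum_congr rfl (fun i _ => h1 i)
      _ = Cq * w ^ J * ∑ i ∈ Finset.range k, w ^ i := by rw [Finset.mul_sum]
      _ ≤ Cq * w ^ J * (1-w)⁻¹ := by
          apply mul_le_mul_of_nonneg_left _ (by positivity)
          have h2 := Summable.sum_le_tsum (Finset.range k) (fun i _ => pow_nonneg hw0.le i)
            (summable_geometric_of_lt_one hw0.le hw1)
          rwa [tsum_geometric_of_lt_one hw0.le hw1] at h2
  refine ⟨T, hT0, ?_⟩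
  set g : ℝ := (2:ℝ) ^ (2*α) with hg_def
  have hg1 : 1 < g := by
    rw [hg_def, Real.one_lt_rpow_iff_of_pos (by norm_num)]
    left; exact ⟨one_lt_two, by linarith⟩
  have hg0 : 0 < g := lt_trans one_pos hg1
  have hgq0 : 0 < g*q := mul_pos hg0 hq0
  have hgq1 : 1 < g*q := by
    have hinv : (2:ℝ) ^ (-(2*α)) = g⁻¹ := by
      rw [hg_def, ← Real.rpow_neg (by norm_num : (0:ℝ) ≤ 2)]
    rw [hinv] at hqa
    have h := mul_lt_mul_of_pos_left hqa hg0
    rwa [mul_inv_cancel₀ hg0.ne'] at h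
  have hlow : ∀ k : ℕ, ENNReal.ofReal ((g*q) ^ J * (g*q) ^ k) ≤
      ⨆ t ∈ Set.Icc (0 : ℝ) T,
        ∑' l : ℕ, ENNReal.ofReal
          ((1 + (2 : ℝ) ^ (2 * α * ((j0 : ℝ) + (l : ℝ)))) * (a (j0 + l) t) ^ 2) := by
    intro k
    set Jk : ℤ := J + (k:ℤ) with hJk_def
    have hj0Jk : j0 < Jk := by omega
    set t : ℝ := tk k with ht_def
    have ht0 : 0 ≤ t := htk0 k
    have htT : t ∈ Set.Icc (0:ℝ) T := ⟨ht0, htkT k⟩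
    have hle := le_biSup
      (f := fun t : ℝ => ∑' l : ℕ, ENNReal.ofReal
        ((1 + (2 : ℝ) ^ (2 * α * ((j0 : ℝ) + (l : ℝ)))) * (a (j0 + l) t) ^ 2)) htT
    set d : ℕ := (Jk - j0).toNat with hd_def
    have hd : (d:ℤ) = Jk - j0 := Int.toNat_of_nonneg (by omega)
    have hstep1 : ∑' l : ℕ, ENNReal.ofReal
          ((1 + (2 : ℝ) ^ (2 * α * ((j0 : ℝ) + ((l + d : ℕ) : ℝ)))) * (a (j0 + ((l+d : ℕ) : ℤ)) t) ^ 2)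
        ≤ ∑' l : ℕ, ENNReal.ofReal
          ((1 + (2 : ℝ) ^ (2 * α * ((j0 : ℝ) + (l : ℝ)))) * (a (j0 + l) t) ^ 2) :=
      ENNReal.tsum_comp_le_tsum_of_injective (add_left_injective d) _
    have hstep2 : ∀ l : ℕ, ENNReal.ofReal ((2:ℝ) ^ (2*α*((Jk : ℤ) : ℝ)) * (a (Jk + (l:ℤ)) t) ^ 2) ≤
        ENNReal.ofReal
          ((1 + (2 : ℝ) ^ (2 * α * ((j0 : ℝ) + ((l + d : ℕ) : ℝ)))) * (a (j0 + ((l+d : ℕ) : ℤ)) t) ^ 2) := by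
      intro l
      have hidx : j0 + ((l+d : ℕ) : ℤ) = Jk + (l:ℤ) := by push_cast; omega
      rw [hidx]
      apply ENNReal.ofReal_le_ofReal
      apply mul_le_mul_of_nonneg_right _ (sq_nonneg _)
      have hidxR : ((Jk : ℤ) : ℝ) ≤ (j0 : ℝ) + ((l + d : ℕ) : ℝ) := by
        have h := congrArg (fun n : ℤ => (n : ℝ)) hidx
        push_cast at h ⊢
        have hl0 : (0:ℝ) ≤ (l:ℝ) := Nat.cast_nonneg l
        linarith
      have hexp : 2*α*((Jk : ℤ) : ℝ) ≤ 2 * α * ((j0 : ℝ) + ((l + d : ℕ) : ℝ)) := by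
        nlinarith
      calc (2:ℝ) ^ (2*α*((Jk : ℤ) : ℝ))
          ≤ (2:ℝ) ^ (2 * α * ((j0 : ℝ) + ((l + d : ℕ) : ℝ))) :=
            Real.rpow_le_rpow_of_exponent_le one_le_two hexp
        _ ≤ 1 + (2:ℝ) ^ (2 * α * ((j0 : ℝ) + ((l + d : ℕ) : ℝ))) :=
            le_add_of_nonneg_left zero_le_one
    have hstep3 : ENNReal.ofReal ((2:ℝ) ^ (2*α*((Jk : ℤ) : ℝ)) * E Jk t) =
        ∑' l : ℕ, ENNReal.ofReal ((2:ℝ) ^ (2*α*((Jk : ℤ) : ℝ)) * (a (Jk + (l:ℤ)) t) ^ 2) := by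
      rw [hE, ← tsum_mul_left]
      exact ENNReal.ofReal_tsum_of_nonneg (fun l => by positivity)
        ((hsum Jk hj0Jk t ht0).mul_left _)
    have hstep4 : ENNReal.ofReal ((g*q) ^ J * (g*q) ^ k) ≤
        ENNReal.ofReal ((2:ℝ) ^ (2*α*((Jk : ℤ) : ℝ)) * E Jk t) := by
      apply ENNReal.ofReal_le_ofReal
      have hC : (2:ℝ) ^ (2*α*((Jk : ℤ) : ℝ)) = g ^ Jk := by
        rw [hg_def, ← Real.rpow_intCast g Jk, ← Real.rpow_mul (by norm_num : (0:ℝ) ≤ 2)]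
      have hgq : (g*q) ^ J * (g*q) ^ k = g ^ Jk * q ^ Jk := by
        rw [← zpow_natCast (g*q) k, ← zpow_add₀ hgq0.ne', ← hJk_def, mul_zpow]
      rw [hgq, hC]
      have hit : q ^ Jk ≤ E Jk t := hiter k
      have hg' : 0 ≤ g ^ Jk := (zpow_pos hg0 Jk).le
      exact mul_le_mul_of_nonneg_left hit hg'
    calc ENNReal.ofReal ((g*q) ^ J * (g*q) ^ k)
        ≤ ENNReal.ofReal ((2:ℝ) ^ (2*α*((Jk : ℤ) : ℝ)) * E Jk t) := hstep4
      _ = ∑' l : ℕ, ENNReal.ofReal ((2:ℝ) ^ (2*α*((Jk : ℤ) : ℝ)) * (a (Jk + (l:ℤ)) t) ^ 2) := hstep3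
      _ ≤ ∑' l : ℕ, ENNReal.ofReal
            ((1 + (2 : ℝ) ^ (2 * α * ((j0 : ℝ) + ((l + d : ℕ) : ℝ)))) * (a (j0 + ((l+d : ℕ) : ℤ)) t) ^ 2) :=
          ENNReal.tsum_le_tsum hstep2
      _ ≤ ∑' l : ℕ, ENNReal.ofReal
            ((1 + (2 : ℝ) ^ (2 * α * ((j0 : ℝ) + (l : ℝ)))) * (a (j0 + l) t) ^ 2) := hstep1
      _ ≤ _ := hle
  by_contra hS
  obtain ⟨n, hn⟩ := ENNReal.exists_nat_gt hS
  have hc0 : 0 < (g*q) ^ J := zpow_pos hgq0 J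
  obtain ⟨k, hk⟩ := pow_unbounded_of_one_lt ((n:ℝ)/((g*q) ^ J)) hgq1
  have hnk : (n:ℝ) ≤ (g*q) ^ J * (g*q) ^ k := by
    rw [div_lt_iff₀ hc0] at hk
    nlinarith
  have h1 : (n : ℝ≥0∞) ≤ ⨆ t ∈ Set.Icc (0 : ℝ) T,
      ∑' l : ℕ, ENNReal.ofReal
        ((1 + (2 : ℝ) ^ (2 * α * ((j0 : ℝ) + (l : ℝ)))) * (a (j0 + l) t) ^ 2) :=
    calc (n : ℝ≥0∞) = ENNReal.ofReal (n:ℝ) := (ENNReal.ofReal_natCast n).symm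
      _ ≤ ENNReal.ofReal ((g*q) ^ J * (g*q) ^ k) := ENNReal.ofReal_le_ofReal hnk
      _ ≤ _ := hlow k
  exact absurd h1 (not_le.mpr hn)
end

section
/- Let j0 ∈ ℤ and let (a_j)_{j ≥ j0} be a solution on [0, ∞) of the Friedlander–Pavlovic model 2 da_j/dt = 2^{5j/2} a_{j-1}² − 2^{5(j+1)/2} a_j a_{j+1} for j > j0, with 2 da_{j0}/dt = −2^{5(j0+1)/2} a_{j0} a_{j0+1}, such that a_j(t) ≥ 0 for all j and t ≥ 0, and assume that for every j > j0 the tail energy E_{B(j)}(t) = Σ_{l ≥ j} a_l(t)² is finite for every t ≥ 0 and differentiable in t with d/dt E_{B(j)}(t) = 2^{5j/2} a_{j-1}(t)² a_j(t). Then for every α > 0 and every q with max(2^{-5}, 2^{-2α}) < q < 1, there exists an integer J0 such that: if E_{B(J)}(0) ≥ q^J for some integer J ≥ J0, then there exists a finite time T such that sup_{t ∈ [0, T]} Σ_{j ≥ j0} (1 + 2^{2αj}) a_j(t)² = +∞. In other words, the Friedlander–Pavlovic model exhibits finite-time blow-up of the H^α norm for every α > 0, not just for α > 3/2. -/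
open scoped ENNReal
open Set

/-- monotonicity from nonneg derivative on a closed interval -/
lemma FP_mono (f f' : ℝ → ℝ) {x y : ℝ}
    (hd : ∀ t ∈ Icc x y, HasDerivWithinAt f (f' t) (Icc x y) t)
    (h0 : ∀ t ∈ Icc x y, 0 ≤ f' t) : MonotoneOn f (Icc x y) := by
  refine monotoneOn_of_hasDerivWithinAt_nonneg (convex_Icc x y)
    (fun t ht => (hd t ht).continuousWithinAt) (f' := f') ?_ ?_
  · intro t ht
    exact (hd t (interior_subset ht)).mono interior_subset
  · intro t ht; exact h0 t (interior_subset ht)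

lemma FP_le (f f' : ℝ → ℝ) {x y : ℝ} (hxy : x ≤ y)
    (hd : ∀ t ∈ Icc x y, HasDerivWithinAt f (f' t) (Icc x y) t)
    (h0 : ∀ t ∈ Icc x y, 0 ≤ f' t) : f x ≤ f y :=
  FP_mono f f' hd h0 ⟨le_refl x, hxy⟩ ⟨hxy, le_refl y⟩ hxy

lemma FP_growth (f f' : ℝ → ℝ) {x y c : ℝ} (hxy : x ≤ y)
    (hd : ∀ t ∈ Icc x y, HasDerivWithinAt f (f' t) (Icc x y) t)
    (h0 : ∀ t ∈ Icc x y, c ≤ f' t) : f x + c * (y - x) ≤ f y := by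
  have hct : ∀ t : ℝ, HasDerivAt (fun u : ℝ => c * u) c t := fun t => by
    simpa using (hasDerivAt_id t).const_mul c
  have := FP_le (fun t => f t - c * t) (fun t => f' t - c) hxy
    (fun t ht => (hd t ht).sub ((hct t).hasDerivWithinAt))
    (fun t ht => sub_nonneg.2 (h0 t ht))
  linarith

noncomputable def FPA (q : ℝ) (j : ℤ) : ℝ :=
  (2:ℝ) ^ (5*((j:ℝ)+1)/2) * ((1-q) * q ^ (j:ℝ))
noncomputable def FPB (q : ℝ) (j : ℤ) : ℝ :=
  (2:ℝ) ^ (5*((j:ℝ)+2)/2) * q ^ (((j:ℝ)+1)/2)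
noncomputable def FPm (q : ℝ) (j : ℤ) : ℝ := FPA q j / (2 * FPB q j)
noncomputable def FPd (q : ℝ) (j : ℤ) : ℝ :=
  2 * Real.log 2 / FPB q j + q ^ ((j:ℝ)+1) / (FPA q j * FPm q j)

lemma FPA_pos {q : ℝ} (hq0 : 0 < q) (hq2 : q < 1) (j : ℤ) : 0 < FPA q j :=
  mul_pos (Real.rpow_pos_of_pos two_pos _)
    (mul_pos (by linarith) (Real.rpow_pos_of_pos hq0 _))

lemma FPB_pos {q : ℝ} (hq0 : 0 < q) (j : ℤ) : 0 < FPB q j :=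
  mul_pos (Real.rpow_pos_of_pos two_pos _) (Real.rpow_pos_of_pos hq0 _)

lemma FPm_pos {q : ℝ} (hq0 : 0 < q) (hq2 : q < 1) (j : ℤ) : 0 < FPm q j :=
  div_pos (FPA_pos hq0 hq2 j) (mul_pos two_pos (FPB_pos hq0 j))

lemma FPd_pos {q : ℝ} (hq0 : 0 < q) (hq2 : q < 1) (j : ℤ) : 0 < FPd q j := by
  have hA := FPA_pos hq0 hq2 j
  have hB := FPB_pos hq0 j
  have hm := FPm_pos hq0 hq2 j
  have hlog : 0 < Real.log 2 := Real.log_pos (by norm_num)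
  have h2 : 0 < q ^ ((j:ℝ)+1) := Real.rpow_pos_of_pos hq0 _
  exact add_pos (by positivity) (by positivity)

lemma FPA_succ {q : ℝ} (hq0 : 0 < q) (j : ℤ) :
    FPA q (j+1) = (2:ℝ)^((5:ℝ)/2) * q * FPA q j := by
  unfold FPA
  push_cast
  rw [show 5*(((j:ℝ)+1)+1)/2 = 5/2 + 5*((j:ℝ)+1)/2 by ring,
    Real.rpow_add two_pos, show (j:ℝ)+1 = (j:ℝ) + 1 from rfl,
    Real.rpow_add hq0, Real.rpow_one]
  ring

lemma FPB_succ {q : ℝ} (hq0 : 0 < q) (j : ℤ) :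
    FPB q (j+1) = (2:ℝ)^((5:ℝ)/2) * q^((1:ℝ)/2) * FPB q j := by
  unfold FPB
  push_cast
  rw [show 5*(((j:ℝ)+1)+2)/2 = 5/2 + 5*((j:ℝ)+2)/2 by ring,
    Real.rpow_add two_pos,
    show (((j:ℝ)+1)+1)/2 = 1/2 + ((j:ℝ)+1)/2 by ring,
    Real.rpow_add hq0]
  ring

lemma FPd_succ {q : ℝ} (hq0 : 0 < q) (hq2 : q < 1) (j : ℤ) :
    FPd q (j+1) = ((2:ℝ)^((5:ℝ)/2) * q^((1:ℝ)/2))⁻¹ * FPd q j := by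
  have hA := FPA_pos hq0 hq2 j
  have hB := FPB_pos hq0 j
  have hq1 : q ^ (((j:ℝ)+1)+1) = q * q ^ ((j:ℝ)+1) := by
    rw [show ((j:ℝ)+1)+1 = 1 + ((j:ℝ)+1) by ring, Real.rpow_add hq0, Real.rpow_one]
  unfold FPd FPm
  rw [FPA_succ hq0, FPB_succ hq0]
  push_cast
  rw [hq1]
  have hu : (0:ℝ) < (2:ℝ)^((5:ℝ)/2) := Real.rpow_pos_of_pos two_pos _
  have hv : (0:ℝ) < q^((1:ℝ)/2) := Real.rpow_pos_of_pos hq0 _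
  have hvv : q^((1:ℝ)/2) * q^((1:ℝ)/2) = q := by
    rw [← Real.rpow_add hq0]; norm_num
  set u := (2:ℝ)^((5:ℝ)/2) with hu'
  set v := q^((1:ℝ)/2) with hv'
  set Aj := FPA q j
  set Bj := FPB q j
  set X := q ^ ((j:ℝ)+1)
  rw [show q = v * v from hvv.symm]
  field_simp
set_option maxHeartbeats 1000000 in
/-- The Friedlander–Pavlovic model
`2 da_j/dt = 2^{5j/2} a_{j-1}² − 2^{5(j+1)/2} a_j a_{j+1}` (`j > j0`),
`2 da_{j0}/dt = −2^{5(j0+1)/2} a_{j0} a_{j0+1}`, with nonnegative solution and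
tail energies `E_{B(j)}` finite and satisfying
`d/dt E_{B(j)} = 2^{5j/2} a_{j-1}² a_j`, exhibits finite-time blow-up of the
`H^α` norm for every `α > 0` (not just `α > 3/2`): for every `q` with
`max(2^{-5}, 2^{-2α}) < q < 1` there is `J0` such that if `E_{B(J)}(0) ≥ q^J`
for some `J ≥ J0`, then `sup_{t ∈ [0,T]} Σ_{j ≥ j0} (1 + 2^{2αj}) a_j(t)² = ∞`
for some finite time `T`. -/
theorem friedlanderPavlovic_finite_time_blowup
    (j0 : ℤ) (a : ℤ → ℝ → ℝ)
    (hchain : ∀ j : ℤ, j0 < j → ∀ t : ℝ, 0 ≤ t →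
      HasDerivWithinAt (a j)
        (((2 : ℝ) ^ (5 * (j : ℝ) / 2) * (a (j - 1) t) ^ 2
          - (2 : ℝ) ^ (5 * ((j : ℝ) + 1) / 2) * a j t * a (j + 1) t) / 2)
        (Set.Ici 0) t)
    (hchain0 : ∀ t : ℝ, 0 ≤ t →
      HasDerivWithinAt (a j0)
        (-((2 : ℝ) ^ (5 * ((j0 : ℝ) + 1) / 2) * a j0 t * a (j0 + 1) t) / 2)
        (Set.Ici 0) t)
    (hnonneg : ∀ j : ℤ, j0 ≤ j → ∀ t : ℝ, 0 ≤ t → 0 ≤ a j t)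
    (E : ℤ → ℝ → ℝ)
    (hE : ∀ j : ℤ, ∀ t : ℝ, E j t = ∑' l : ℕ, (a (j + l) t) ^ 2)
    (hsum : ∀ j : ℤ, j0 < j → ∀ t : ℝ, 0 ≤ t →
      Summable (fun l : ℕ => (a (j + l) t) ^ 2))
    (hEderiv : ∀ j : ℤ, j0 < j → ∀ t : ℝ, 0 ≤ t →
      HasDerivWithinAt (E j) ((2 : ℝ) ^ (5 * (j : ℝ) / 2) * (a (j - 1) t) ^ 2 * a j t)
        (Set.Ici 0) t)
    (α : ℝ) (hα : 0 < α)
    (q : ℝ) (hq1 : max ((2 : ℝ) ^ (-5 : ℤ)) ((2 : ℝ) ^ (-(2 * α))) < q)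
    (hq2 : q < 1) :
    ∃ J0 : ℤ, j0 ≤ J0 ∧ ∀ J : ℤ, J0 ≤ J → q ^ J ≤ E J 0 →
      ∃ T : ℝ, 0 < T ∧
        (⨆ t ∈ Set.Icc (0 : ℝ) T,
          ∑' l : ℕ, ENNReal.ofReal
            ((1 + (2 : ℝ) ^ (2 * α * ((j0 : ℝ) + (l : ℝ)))) * (a (j0 + l) t) ^ 2))
          = (⊤ : ℝ≥0∞) := by
  have hq5 : (2:ℝ)^(-5:ℤ) < q := (le_max_left _ _).trans_lt hq1
  have hqa : (2:ℝ)^(-(2*α)) < q := (le_max_right _ _).trans_lt hq1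
  have hq0 : 0 < q := lt_trans (by positivity) hq5
  -- the contraction ratio
  set ρ : ℝ := ((2:ℝ)^((5:ℝ)/2) * q^((1:ℝ)/2))⁻¹ with hρdef
  have hsval : (1:ℝ) < (2:ℝ)^((5:ℝ)/2) * q^((1:ℝ)/2) := by
    have h1 : (2:ℝ)^(-5:ℤ) = (2:ℝ)^(-5:ℝ) := by
      rw [← Real.rpow_intCast 2 (-5)]; norm_num
    have h2 : ((2:ℝ)^(-5:ℝ))^((1:ℝ)/2) < q^((1:ℝ)/2) :=
      Real.rpow_lt_rpow (by positivity) (h1 ▸ hq5) (by norm_num)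
    have h3 : ((2:ℝ)^(-5:ℝ))^((1:ℝ)/2) = (2:ℝ)^(-(5:ℝ)/2) := by
      rw [← Real.rpow_mul (by norm_num : (0:ℝ) ≤ 2)]; norm_num
    have h4 : (2:ℝ)^((5:ℝ)/2) * (2:ℝ)^(-(5:ℝ)/2) = 1 := by
      rw [← Real.rpow_add two_pos]; norm_num
    calc (1:ℝ) = (2:ℝ)^((5:ℝ)/2) * (2:ℝ)^(-(5:ℝ)/2) := h4.symm
      _ < (2:ℝ)^((5:ℝ)/2) * q^((1:ℝ)/2) :=
          mul_lt_mul_of_pos_left (h3 ▸ h2) (by positivity)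
  have hρ0 : 0 < ρ := by rw [hρdef]; positivity
  have hρ1 : ρ < 1 := by rw [hρdef]; exact inv_lt_one_of_one_lt₀ hsval
  -- splitting of the tail energy
  have hsplit : ∀ i : ℤ, j0 < i → ∀ t : ℝ, 0 ≤ t →
      E i t = a i t ^ 2 + E (i+1) t := by
    intro i hi t ht
    rw [hE i t, hE (i+1) t, Summable.tsum_eq_zero_add (hsum i hi t ht)]
    congr 1
    · norm_num
    · refine tsum_congr fun b => ?_
      have e : i + ((b+1:ℕ):ℤ) = (i+1) + (b:ℤ) := by push_cast; ring
      rw [e]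
  have hEnn : ∀ i : ℤ, ∀ t : ℝ, 0 ≤ E i t := by
    intro i t; rw [hE]; exact tsum_nonneg fun l => sq_nonneg _
  -- monotonicity of tail energies
  have hmonoE : ∀ i : ℤ, j0 < i → ∀ x y : ℝ, 0 ≤ x → x ≤ y → E i x ≤ E i y := by
    intro i hi x y hx hxy
    refine FP_le (E i) (fun t => (2:ℝ)^(5*(i:ℝ)/2) * a (i-1) t ^2 * a i t) hxy ?_ ?_
    · intro t ht
      exact (hEderiv i hi t (hx.trans ht.1)).mono (fun u hu => hx.trans hu.1)
    · intro t ht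
      have h1 := hnonneg i hi.le t (hx.trans ht.1)
      have h2 : (0:ℝ) ≤ (2:ℝ)^(5*(i:ℝ)/2) := (Real.rpow_pos_of_pos two_pos _).le
      exact mul_nonneg (mul_nonneg h2 (sq_nonneg _)) h1
  -- the key step lemma
  have hstep : ∀ j : ℤ, j0 < j → ∀ s : ℝ, 0 ≤ s → q ^ ((j:ℤ):ℝ) ≤ E j s →
      ∃ s', s ≤ s' ∧ s' ≤ s + FPd q j ∧ q ^ (((j:ℤ):ℝ)+1) ≤ E (j+1) s' := by
    intro j hj s hs hEjs
    by_contra hcon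
    push_neg at hcon
    set A : ℝ := FPA q j with hAdef
    set B : ℝ := FPB q j with hBdef
    set m : ℝ := FPm q j with hmdef
    set Δ : ℝ := FPd q j with hΔdef
    have hA : 0 < A := FPA_pos hq0 hq2 j
    have hB : 0 < B := FPB_pos hq0 j
    have hm : 0 < m := FPm_pos hq0 hq2 j
    have hΔ : 0 < Δ := FPd_pos hq0 hq2 j
    have hAeq : A = (2:ℝ)^(5*((j:ℝ)+1)/2) * ((1-q) * q^((j:ℤ):ℝ)) := rfl
    have hBeq : B = (2:ℝ)^(5*((j:ℝ)+2)/2) * q^((((j:ℤ):ℝ)+1)/2) := rfl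
    have hmeq : m = A / (2 * B) := rfl
    set τ : ℝ := 2 * Real.log 2 / B with hτdef
    have hΔeq : Δ = τ + q^(((j:ℤ):ℝ)+1)/(A*m) := rfl
    have hτ0 : 0 ≤ τ := div_nonneg (by positivity) hB.le
    have hΔτ : τ ≤ Δ := by
      rw [hΔeq]
      have : 0 ≤ q^(((j:ℤ):ℝ)+1)/(A*m) := by positivity
      linarith
    set I : Set ℝ := Set.Icc s (s+Δ) with hIdef
    -- lower bound for a j on I
    have haj : ∀ t ∈ I, (1-q) * q^((j:ℤ):ℝ) ≤ a j t ^ 2 := by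
      intro t ht
      have ht0 : 0 ≤ t := hs.trans ht.1
      have h1 := hsplit j hj t ht0
      have h2 : q^((j:ℤ):ℝ) ≤ E j t := le_trans hEjs (hmonoE j hj s t hs ht.1)
      have h3 := hcon t ht.1 ht.2
      have h4 : q^(((j:ℤ):ℝ)+1) = q^((j:ℤ):ℝ) * q := Real.rpow_add_one hq0.ne' _
      nlinarith
    -- upper bound for a (j+2) on I
    have ha2 : ∀ t ∈ I, a (j+2) t ≤ q^((((j:ℤ):ℝ)+1)/2) := by
      intro t ht
      have ht0 : 0 ≤ t := hs.trans ht.1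
      have h1 := hsplit (j+1) (by omega) t ht0
      rw [show (j+1)+1 = j+2 by ring] at h1
      have h2 : a (j+2) t ^2 ≤ E (j+2) t := by
        rw [hE (j+2) t]
        have := Summable.le_tsum (hsum (j+2) (by omega) t ht0) 0 (fun l _ => sq_nonneg _)
        simpa using this
      have h3 := hcon t ht.1 ht.2
      have hca : q^((((j:ℤ):ℝ)+1)/2) * q^((((j:ℤ):ℝ)+1)/2) = q^(((j:ℤ):ℝ)+1) := by
        rw [← Real.rpow_add hq0]; congr 1; ring
      have hc0 : 0 < q^((((j:ℤ):ℝ)+1)/2) := Real.rpow_pos_of_pos hq0 _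
      have h5 : a (j+2) t ^2 < q^((((j:ℤ):ℝ)+1)/2) * q^((((j:ℤ):ℝ)+1)/2) := by
        rw [hca]; nlinarith [sq_nonneg (a (j+1) t)]
      nlinarith [hnonneg (j+2) (by omega) t ht0]
    -- derivative of a (j+1)
    set D : ℝ → ℝ := fun t => ((2:ℝ) ^ (5 * ((j:ℝ)+1) / 2) * a j t ^ 2
      - (2:ℝ) ^ (5 * (((j:ℝ)+1) + 1) / 2) * a (j+1) t * a (j+2) t) / 2 with hDdef
    have hder1 : ∀ t : ℝ, 0 ≤ t → HasDerivWithinAt (a (j+1)) (D t) (Set.Ici 0) t := by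
      intro t ht
      have h := hchain (j+1) (by omega) t ht
      have e1 : ((j+1:ℤ):ℝ) = (j:ℝ)+1 := by push_cast; ring
      rw [e1, show (j+1-1 : ℤ) = j by ring, show (j+1+1 : ℤ) = j+2 by ring] at h
      exact h
    set K : ℝ := A / B with hKdef
    have hK0 : 0 < K := div_pos hA hB
    have hKB : K * B = A := div_mul_cancel₀ A hB.ne'
    have hmK : 2 * m = K := by
      rw [hmeq, hKdef]; field_simp
    have hexp : ∀ t : ℝ, HasDerivAt (fun u : ℝ => Real.exp (B*u/2))
        (Real.exp (B*t/2) * (B/2)) t := by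
      intro t
      have h1 : HasDerivAt (fun u : ℝ => B*u/2) (B/2) t := by
        simpa using ((hasDerivAt_id t).const_mul B).div_const 2
      exact h1.exp
    -- nonnegativity of the derivative of the Gronwall quantity
    have hg'0 : ∀ t ∈ I, 0 ≤ D t * Real.exp (B*t/2)
        + (a (j+1) t - K) * (Real.exp (B*t/2) * (B/2)) := by
      intro t ht
      have ht0 : 0 ≤ t := hs.trans ht.1
      have e : (0:ℝ) < Real.exp (B*t/2) := Real.exp_pos _
      have f1 : (2:ℝ)^(5*((j:ℝ)+1)/2) * ((1-q) * q^((j:ℤ):ℝ))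
          ≤ (2:ℝ)^(5*((j:ℝ)+1)/2) * a j t ^2 :=
        mul_le_mul_of_nonneg_left (haj t ht) (Real.rpow_pos_of_pos two_pos _).le
      have f2 : (2:ℝ)^(5*(((j:ℝ)+1)+1)/2) * a (j+1) t * a (j+2) t ≤ B * a (j+1) t := by
        have hcoe : (2:ℝ)^(5*(((j:ℝ)+1)+1)/2) = (2:ℝ)^(5*((j:ℝ)+2)/2) := by ring_nf
        have hp : (0:ℝ) < (2:ℝ)^(5*((j:ℝ)+2)/2) := Real.rpow_pos_of_pos two_pos _
        have h1 : a (j+1) t * a (j+2) t ≤ a (j+1) t * q^((((j:ℤ):ℝ)+1)/2) :=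
          mul_le_mul_of_nonneg_left (ha2 t ht) (hnonneg (j+1) (by omega) t ht0)
        calc (2:ℝ)^(5*(((j:ℝ)+1)+1)/2) * a (j+1) t * a (j+2) t
            = (2:ℝ)^(5*((j:ℝ)+2)/2) * (a (j+1) t * a (j+2) t) := by rw [hcoe]; ring
          _ ≤ (2:ℝ)^(5*((j:ℝ)+2)/2) * (a (j+1) t * q^((((j:ℤ):ℝ)+1)/2)) :=
              mul_le_mul_of_nonneg_left h1 hp.le
          _ = B * a (j+1) t := by rw [hBeq]; ring
      have key : 0 ≤ D t + (a (j+1) t - K) * (B/2) := by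
        rw [hDdef]
        simp only
        rw [hAeq] at hKB
        linarith
      calc (0:ℝ) ≤ Real.exp (B*t/2) * (D t + (a (j+1) t - K) * (B/2)) :=
            mul_nonneg e.le key
        _ = D t * Real.exp (B*t/2) + (a (j+1) t - K) * (Real.exp (B*t/2) * (B/2)) := by ring
    -- Gronwall: monotone quantity
    have hgmono : ∀ t ∈ I, (a (j+1) s - K) * Real.exp (B*s/2)
        ≤ (a (j+1) t - K) * Real.exp (B*t/2) := by
      intro t ht
      refine FP_le (fun u => (a (j+1) u - K) * Real.exp (B*u/2))
        (fun u => D u * Real.exp (B*u/2) + (a (j+1) u - K) * (Real.exp (B*u/2) * (B/2)))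
        ht.1 ?_ ?_
      · intro u hu
        have hu0 : 0 ≤ u := hs.trans hu.1
        exact (((hder1 u hu0).mono (fun v hv => hs.trans hv.1)).sub_const K).mul
          (hexp u).hasDerivWithinAt
      · intro u hu
        exact hg'0 u ⟨hu.1, hu.2.trans ht.2⟩
    -- lower bound for a (j+1) after the waiting time
    have hm_lb : ∀ t ∈ Set.Icc (s+τ) (s+Δ), m ≤ a (j+1) t := by
      intro t ht
      have htI : t ∈ I := ⟨by linarith [ht.1], ht.2⟩
      have h1 := hgmono t htI
      have has : 0 ≤ a (j+1) s := hnonneg (j+1) (by omega) s hs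
      have hes : (0:ℝ) < Real.exp (B*s/2) := Real.exp_pos _
      have het : (0:ℝ) < Real.exp (B*t/2) := Real.exp_pos _
      have h2 : -K * Real.exp (B*s/2) ≤ (a (j+1) t - K) * Real.exp (B*t/2) :=
        le_trans (by nlinarith) h1
      have hBle : Real.log 2 ≤ B*(t-s)/2 := by
        have hts : τ ≤ t - s := by linarith [ht.1]
        have : B * τ / 2 = Real.log 2 := by rw [hτdef]; field_simp
        nlinarith
      have hexps : Real.exp (B*s/2) ≤ Real.exp (B*t/2) * (1/2) := by
        have h4 : Real.exp (B*s/2 - B*t/2) ≤ 1/2 := by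
          rw [show (1:ℝ)/2 = Real.exp (-(Real.log 2)) by
            rw [Real.exp_neg, Real.exp_log two_pos]; norm_num]
          exact Real.exp_le_exp.2 (by linarith)
        calc Real.exp (B*s/2) = Real.exp (B*t/2) * Real.exp (B*s/2 - B*t/2) := by
              rw [← Real.exp_add]; ring_nf
          _ ≤ Real.exp (B*t/2) * (1/2) := mul_le_mul_of_nonneg_left h4 het.le
      have h5 : K * Real.exp (B*s/2) ≤ K * (Real.exp (B*t/2) * (1/2)) :=
        mul_le_mul_of_nonneg_left hexps hK0.le
      have h7 : 2*(m * Real.exp (B*t/2)) = K * Real.exp (B*t/2) := by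
        rw [← hmK]; ring
      have h6 : m * Real.exp (B*t/2) ≤ a (j+1) t * Real.exp (B*t/2) := by nlinarith
      exact le_of_mul_le_mul_right h6 het
    -- energy growth on the second phase
    have hgrow : E (j+1) (s+τ) + (A*m) * ((s+Δ) - (s+τ)) ≤ E (j+1) (s+Δ) := by
      refine FP_growth (E (j+1))
        (fun t => (2:ℝ)^(5*((j:ℝ)+1)/2) * a j t ^2 * a (j+1) t)
        (by linarith : s+τ ≤ s+Δ) ?_ ?_
      · intro t ht
        have ht0 : 0 ≤ t := by
          have : 0 ≤ s + τ := by linarith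
          linarith [ht.1]
        have h := hEderiv (j+1) (by omega) t ht0
        have e1 : ((j+1:ℤ):ℝ) = (j:ℝ)+1 := by push_cast; ring
        rw [e1, show (j+1-1 : ℤ) = j by ring] at h
        exact h.mono (fun v hv => by
          have : 0 ≤ s + τ := by linarith
          exact le_trans this hv.1)
      · intro t ht
        have htI : t ∈ I := ⟨by linarith [ht.1], ht.2⟩
        have f1 : A ≤ (2:ℝ)^(5*((j:ℝ)+1)/2) * a j t^2 := by
          rw [hAeq]
          exact mul_le_mul_of_nonneg_left (haj t htI) (Real.rpow_pos_of_pos two_pos _).le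
        have f2 : m ≤ a (j+1) t := hm_lb t ht
        exact mul_le_mul f1 f2 hm.le (le_trans hA.le f1)
    have hfin : q^(((j:ℤ):ℝ)+1) ≤ E (j+1) (s+Δ) := by
      have hAm : (A*m) * ((s+Δ)-(s+τ)) = q^(((j:ℤ):ℝ)+1) := by
        have e : (s+Δ)-(s+τ) = q^(((j:ℤ):ℝ)+1)/(A*m) := by rw [hΔeq]; ring
        rw [e]
        field_simp
      have := hEnn (j+1) (s+τ)
      linarith
    have := hcon (s+Δ) (by linarith) le_rfl
    linarith
  -- we can take J0 = j0 + 1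
  refine ⟨j0 + 1, by omega, ?_⟩
  intro J hJ hEJ0
  -- the iteration
  have hiter : ∀ k : ℕ, ∃ s : ℝ, 0 ≤ s ∧
      s ≤ ∑ i ∈ Finset.range k, FPd q (J + i) ∧
      q ^ ((J:ℝ)+(k:ℝ)) ≤ E (J + (k:ℤ)) s := by
    intro k
    induction k with
    | zero =>
      refine ⟨0, le_rfl, by simp, ?_⟩
      have h : q ^ ((J:ℤ):ℝ) ≤ E J 0 := by rw [Real.rpow_intCast]; exact hEJ0
      simpa using h
    | succ k ih =>
      obtain ⟨s, hs0, hsle, hEk⟩ := ih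
      have hcast : ((J + (k:ℤ) : ℤ):ℝ) = (J:ℝ)+(k:ℝ) := by push_cast; ring
      obtain ⟨s', h1, h2, h3⟩ := hstep (J + (k:ℤ)) (by omega) s hs0 (by rw [hcast]; exact hEk)
      refine ⟨s', le_trans hs0 h1, ?_, ?_⟩
      · rw [Finset.sum_range_succ]
        push_cast at h2 ⊢
        linarith
      · have e1 : (J + ((k+1:ℕ):ℤ)) = (J + (k:ℤ)) + 1 := by push_cast; ring
        have e2 : (J:ℝ)+((k+1:ℕ):ℝ) = ((J + (k:ℤ) : ℤ):ℝ)+1 := by push_cast; ring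
        rw [e1, e2]
        exact h3
  -- the geometric bound on the total time
  have hgeo : ∀ i : ℕ, FPd q (J + (i:ℤ)) = FPd q J * ρ ^ i := by
    intro i
    induction i with
    | zero => simp
    | succ i ih =>
      have e : (J + ((i+1:ℕ):ℤ)) = (J + (i:ℤ)) + 1 := by push_cast; ring
      rw [e, FPd_succ hq0 hq2, ih, ← hρdef]
      ring
  set T : ℝ := FPd q J / (1 - ρ) with hTdef
  have hT0 : 0 < T := div_pos (FPd_pos hq0 hq2 J) (by linarith)
  have hsum_le : ∀ k : ℕ, ∑ i ∈ Finset.range k, FPd q (J + i) ≤ T := by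
    intro k
    have h1 : ∑ i ∈ Finset.range k, FPd q (J + i)
        = FPd q J * ∑ i ∈ Finset.range k, ρ^i := by
      rw [Finset.mul_sum]; exact Finset.sum_congr rfl fun i _ => hgeo i
    have h2 : (∑ i ∈ Finset.range k, ρ^i) * (1-ρ) ≤ 1 := by
      have h := geom_sum_mul ρ k
      have hρk : (0:ℝ) ≤ ρ^k := by positivity
      nlinarith
    have h3 : ∑ i ∈ Finset.range k, ρ^i ≤ 1/(1-ρ) := by
      rw [le_div_iff₀ (by linarith)]; exact h2
    calc ∑ i ∈ Finset.range k, FPd q (J + i) = FPd q J * ∑ i ∈ Finset.range k, ρ^i := h1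
      _ ≤ FPd q J * (1/(1-ρ)) :=
          mul_le_mul_of_nonneg_left h3 (FPd_pos hq0 hq2 J).le
      _ = T := by rw [hTdef]; ring
  -- all tail energies are large at time T
  have hfinal : ∀ j : ℤ, J ≤ j → q ^ ((j:ℤ):ℝ) ≤ E j T := by
    intro j hj
    have hk : (((j - J).toNat:ℕ) : ℤ) = j - J := Int.toNat_of_nonneg (by omega)
    obtain ⟨s, hs0, hsle, hEk⟩ := hiter (j - J).toNat
    have e : J + (((j - J).toNat:ℕ):ℤ) = j := by rw [hk]; ring
    rw [e] at hEk
    have e2 : (J:ℝ) + (((j - J).toNat:ℕ):ℝ) = ((j:ℤ):ℝ) := by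
      have := congrArg (Int.cast : ℤ → ℝ) hk
      push_cast at this ⊢
      linarith
    rw [e2] at hEk
    have hj0j : j0 < j := by omega
    exact le_trans hEk (hmonoE j hj0j s T hs0 (hsle.trans (hsum_le _)))
  -- blow-up of the H^α norm at time T
  refine ⟨T, hT0, ?_⟩
  set S : ℝ≥0∞ := ∑' l : ℕ, ENNReal.ofReal
      ((1 + (2:ℝ)^(2*α*((j0:ℝ)+(l:ℝ)))) * a (j0 + l) T ^2) with hSdef
  have hSle : ∀ j : ℤ, J ≤ j →
      ENNReal.ofReal ((2:ℝ)^(2*α*((j:ℤ):ℝ)) * q^((j:ℤ):ℝ)) ≤ S := by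
    intro j hj
    have hj0j : j0 < j := by omega
    have hnk : (((j - j0).toNat:ℕ):ℤ) = j - j0 := Int.toNat_of_nonneg (by omega)
    set n : ℕ := (j - j0).toNat with hn
    have h1 : (∑' l : ℕ, ENNReal.ofReal
        ((1 + (2:ℝ)^(2*α*((j0:ℝ)+((n+l:ℕ):ℝ)))) * a (j0 + ((n+l:ℕ):ℤ)) T ^2)) ≤ S := by
      exact ENNReal.tsum_comp_le_tsum_of_injective (add_right_injective n) _
    refine le_trans ?_ h1
    have h2 : ∀ l : ℕ, ENNReal.ofReal ((2:ℝ)^(2*α*((j:ℤ):ℝ)) * a (j + l) T ^2)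
        ≤ ENNReal.ofReal
          ((1 + (2:ℝ)^(2*α*((j0:ℝ)+((n+l:ℕ):ℝ)))) * a (j0 + ((n+l:ℕ):ℤ)) T ^2) := by
      intro l
      have e1 : (j0 + ((n+l:ℕ):ℤ)) = j + (l:ℤ) := by
        push_cast
        omega
      rw [e1]
      apply ENNReal.ofReal_le_ofReal
      have e2 : (j0:ℝ) + ((n+l:ℕ):ℝ) = ((j:ℤ):ℝ) + (l:ℝ) := by
        have := congrArg (Int.cast : ℤ → ℝ) hnk
        push_cast at this ⊢
        linarith
      rw [e2]
      have h3 : (2:ℝ)^(2*α*((j:ℤ):ℝ)) ≤ 1 + (2:ℝ)^(2*α*(((j:ℤ):ℝ)+(l:ℝ))) := by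
        have h4 : (2:ℝ)^(2*α*((j:ℤ):ℝ)) ≤ (2:ℝ)^(2*α*(((j:ℤ):ℝ)+(l:ℝ))) := by
          apply Real.rpow_le_rpow_of_exponent_le one_le_two
          have hl : (0:ℝ) ≤ (l:ℝ) := Nat.cast_nonneg l
          nlinarith
        linarith
      exact mul_le_mul_of_nonneg_right h3 (sq_nonneg _)
    have hrp : (0:ℝ) ≤ (2:ℝ)^(2*α*((j:ℤ):ℝ)) := (Real.rpow_pos_of_pos two_pos _).le
    calc ENNReal.ofReal ((2:ℝ)^(2*α*((j:ℤ):ℝ)) * q^((j:ℤ):ℝ))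
        ≤ ENNReal.ofReal ((2:ℝ)^(2*α*((j:ℤ):ℝ)) * E j T) :=
          ENNReal.ofReal_le_ofReal (mul_le_mul_of_nonneg_left (hfinal j hj) hrp)
      _ = ENNReal.ofReal ((2:ℝ)^(2*α*((j:ℤ):ℝ))) * ENNReal.ofReal (E j T) :=
          ENNReal.ofReal_mul hrp
      _ = ENNReal.ofReal ((2:ℝ)^(2*α*((j:ℤ):ℝ)))
          * ∑' l : ℕ, ENNReal.ofReal (a (j + l) T ^2) := by
          rw [hE j T, ENNReal.ofReal_tsum_of_nonneg (fun l => sq_nonneg _)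
            (hsum j hj0j T hT0.le)]
      _ = ∑' l : ℕ, ENNReal.ofReal ((2:ℝ)^(2*α*((j:ℤ):ℝ)) * a (j + l) T ^2) := by
          rw [← ENNReal.tsum_mul_left]
          exact tsum_congr fun l => (ENNReal.ofReal_mul hrp).symm
      _ ≤ _ := ENNReal.tsum_le_tsum h2
  have hStop : S = ⊤ := by
    apply ENNReal.eq_top_of_forall_nnreal_le
    intro r
    set c : ℝ := (2:ℝ)^(2*α) * q with hcdef
    have hc1 : 1 < c := by
      have h1 : (2:ℝ)^(2*α) * (2:ℝ)^(-(2*α)) = 1 := by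
        rw [← Real.rpow_add two_pos]; simp
      calc (1:ℝ) = (2:ℝ)^(2*α) * (2:ℝ)^(-(2*α)) := h1.symm
        _ < (2:ℝ)^(2*α) * q := mul_lt_mul_of_pos_left hqa (by positivity)
    have hc0 : 0 < c := lt_trans one_pos hc1
    obtain ⟨nn, hnn⟩ := pow_unbounded_of_one_lt ((r:ℝ) / c ^ ((J:ℤ):ℝ)) hc1
    have hcJ : (0:ℝ) < c ^ ((J:ℤ):ℝ) := Real.rpow_pos_of_pos hc0 _
    have h2 : (r:ℝ) ≤ c ^ (((J:ℤ):ℝ) + (nn:ℝ)) := by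
      rw [Real.rpow_add hc0, Real.rpow_natCast]
      have h := (div_lt_iff₀ hcJ).1 hnn
      nlinarith
    have h4 : c ^ (((J:ℤ):ℝ)+(nn:ℝ))
        = (2:ℝ)^(2*α*(((J + (nn:ℤ)):ℤ):ℝ)) * q^(((J + (nn:ℤ)):ℤ):ℝ) := by
      have e : (((J + (nn:ℤ)):ℤ):ℝ) = ((J:ℤ):ℝ)+(nn:ℝ) := by push_cast; ring
      rw [e, hcdef, Real.mul_rpow (by positivity) hq0.le,
        ← Real.rpow_mul (by norm_num : (0:ℝ) ≤ 2)]
    have h3 := hSle (J + (nn:ℤ)) (by omega)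
    calc (r : ℝ≥0∞) = ENNReal.ofReal (r:ℝ) := ENNReal.ofReal_coe_nnreal.symm
      _ ≤ ENNReal.ofReal (c ^ (((J:ℤ):ℝ)+(nn:ℝ))) := ENNReal.ofReal_le_ofReal h2
      _ = ENNReal.ofReal ((2:ℝ)^(2*α*(((J + (nn:ℤ)):ℤ):ℝ)) * q^(((J + (nn:ℤ)):ℤ):ℝ)) := by
          rw [h4]
      _ ≤ S := h3
  have hge : S ≤ ⨆ t ∈ Set.Icc (0:ℝ) T, ∑' l : ℕ, ENNReal.ofReal
      ((1 + (2:ℝ)^(2*α*((j0:ℝ)+(l:ℝ)))) * a (j0 + l) t ^2) := by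
    rw [hSdef]
    exact le_biSup
      (fun t => ∑' l : ℕ, ENNReal.ofReal
        ((1 + (2:ℝ)^(2*α*((j0:ℝ)+(l:ℝ)))) * a (j0 + l) t ^2))
      (show T ∈ Set.Icc (0:ℝ) T from ⟨hT0.le, le_rfl⟩)
  exact top_le_iff.1 (hStop ▸ hge)
end

section
/- Let λ > 1, j0 ∈ ℤ, and let (a_j)_{j ≥ j0} be real-valued differentiable functions on [0, ∞) satisfying the chain model: da_j/dt = λ^j a_{j-1}² − λ^{j+1} a_j a_{j+1} for j > j0 and da_{j0}/dt = −λ^{j0+1} a_{j0} a_{j0+1}. If a_j(0) ≥ 0 for every j ≥ j0, then a_j(t) ≥ 0 for every j ≥ j0 and every t ≥ 0. -/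
open Set intervalIntegral

/-- For the chain model
`da_j/dt = λ^j a_{j-1}² − λ^{j+1} a_j a_{j+1}` (`j > j0`),
`da_{j0}/dt = −λ^{j0+1} a_{j0} a_{j0+1}` with `λ > 1`, nonnegative initial
data stay nonnegative: if `a_j(0) ≥ 0` for every `j ≥ j0`, then
`a_j(t) ≥ 0` for every `j ≥ j0` and every `t ≥ 0`. -/
theorem chainModel_nonneg_preserved
    (lam : ℝ) (hlam : 1 < lam) (j0 : ℤ) (a : ℤ → ℝ → ℝ)
    (hchain : ∀ j : ℤ, j0 < j → ∀ t : ℝ, 0 ≤ t →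
      HasDerivWithinAt (a j)
        (lam ^ j * (a (j - 1) t) ^ 2 - lam ^ (j + 1) * a j t * a (j + 1) t)
        (Set.Ici 0) t)
    (hchain0 : ∀ t : ℝ, 0 ≤ t →
      HasDerivWithinAt (a j0) (-(lam ^ (j0 + 1) * a j0 t * a (j0 + 1) t))
        (Set.Ici 0) t)
    (h0 : ∀ j : ℤ, j0 ≤ j → 0 ≤ a j 0) :
    ∀ j : ℤ, j0 ≤ j → ∀ t : ℝ, 0 ≤ t → 0 ≤ a j t := by
  have hlam0 : (0:ℝ) < lam := lt_trans one_pos hlam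
  intro j hj t ht
  set g : ℝ → ℝ := fun s => lam ^ (j+1) * a (j+1) s with hgdef
  have hj1 : j0 < j + 1 := by omega
  -- continuity of g on [0, ∞)
  have hcontg : ContinuousOn g (Set.Ici 0) := fun s hs =>
    continuousWithinAt_const.mul (hchain (j+1) hj1 s hs).continuousWithinAt
  -- a j has a derivative D with D + g * a j ≥ 0
  obtain ⟨D, hDa, hDpos⟩ : ∃ D : ℝ → ℝ,
      (∀ s ∈ Set.Ici (0:ℝ), HasDerivWithinAt (a j) (D s) (Set.Ici 0) s) ∧
      ∀ s ∈ Set.Ici (0:ℝ), 0 ≤ D s + g s * a j s := by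
    rcases eq_or_lt_of_le hj with heq | hlt
    · refine ⟨fun s => -(lam ^ (j0 + 1) * a j0 s * a (j0 + 1) s), ?_, ?_⟩
      · intro s hs; rw [← heq]; exact hchain0 s hs
      · intro s hs
        have : g s * a j s = lam ^ (j0+1) * a j0 s * a (j0+1) s := by
          rw [hgdef, ← heq]; ring
        rw [this]; simp
    · refine ⟨fun s => lam ^ j * (a (j - 1) s) ^ 2 - lam ^ (j + 1) * a j s * a (j + 1) s,
        fun s hs => hchain j hlt s hs, fun s _ => ?_⟩
      have h1 : (0:ℝ) ≤ lam ^ j * (a (j-1) s) ^ 2 := by positivity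
      have : lam ^ j * (a (j - 1) s) ^ 2 - lam ^ (j + 1) * a j s * a (j + 1) s
          + g s * a j s = lam ^ j * (a (j-1) s) ^ 2 := by rw [hgdef]; ring
      rw [this]; exact h1
  -- antiderivative of g
  set G : ℝ → ℝ := fun u => ∫ s in (0:ℝ)..u, g s with hGdef
  have hGint : ∀ s : ℝ, 0 ≤ s → IntervalIntegrable g MeasureTheory.volume 0 s := by
    intro s hs
    apply ContinuousOn.intervalIntegrable
    apply hcontg.mono
    rw [Set.uIcc_of_le hs]
    exact Set.Icc_subset_Ici_self
  have hGderiv : ∀ s ∈ Set.Ici (0:ℝ), HasDerivWithinAt G (g s) (Set.Ici 0) s := by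
    intro s hs
    rcases eq_or_lt_of_le (show (0:ℝ) ≤ s from hs) with heq | hlt
    · subst heq
      have hmeas : StronglyMeasurableAtFilter g (nhdsWithin 0 (Set.Ioi 0))
          MeasureTheory.volume :=
        ⟨Set.Ici 0, Filter.mem_of_superset self_mem_nhdsWithin Set.Ioi_subset_Ici_self,
          hcontg.aestronglyMeasurable measurableSet_Ici⟩
      have hc : ContinuousWithinAt g (Set.Ioi 0) 0 :=
        (hcontg 0 Set.self_mem_Ici).mono Set.Ioi_subset_Ici_self
      exact intervalIntegral.integral_hasDerivWithinAt_right (hGint 0 le_rfl) hmeas hc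
    · have hmem : Set.Ici (0:ℝ) ∈ nhds s := Ici_mem_nhds hlt
      have hmeas : StronglyMeasurableAtFilter g (nhds s) MeasureTheory.volume :=
        ⟨Set.Ici 0, hmem, hcontg.aestronglyMeasurable measurableSet_Ici⟩
      have hc : ContinuousAt g s := hcontg.continuousAt hmem
      exact (intervalIntegral.integral_hasDerivAt_right (hGint s hs) hmeas hc).hasDerivWithinAt
  -- the function F = a j * exp(G) is monotone on [0, ∞)
  set F : ℝ → ℝ := fun u => a j u * Real.exp (G u) with hFdef
  have hF : ∀ s ∈ Set.Ici (0:ℝ),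
      HasDerivWithinAt F (D s * Real.exp (G s) + a j s * (Real.exp (G s) * g s))
        (Set.Ici 0) s := by
    intro s hs
    exact (hDa s hs).mul ((Real.hasDerivAt_exp (G s)).comp_hasDerivWithinAt s (hGderiv s hs))
  have hFmono : MonotoneOn F (Set.Ici (0:ℝ)) := by
    apply monotoneOn_of_hasDerivWithinAt_nonneg (convex_Ici 0)
      (fun s hs => (hF s hs).continuousWithinAt)
      (fun x hx => (hF x (interior_subset hx)).mono interior_subset)
    intro x hx
    have hx' : x ∈ Set.Ici (0:ℝ) := interior_subset hx
    have : D x * Real.exp (G x) + a j x * (Real.exp (G x) * g x)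
        = (D x + g x * a j x) * Real.exp (G x) := by ring
    rw [this]
    exact mul_nonneg (hDpos x hx') (Real.exp_pos _).le
  have hFt : F 0 ≤ F t := hFmono Set.self_mem_Ici ht ht
  have hF0 : F 0 = a j 0 := by
    simp [hFdef, hGdef, intervalIntegral.integral_same]
  have h1 : 0 ≤ a j t * Real.exp (G t) := by
    have := h0 j hj
    rw [hF0] at hFt
    exact le_trans this hFt
  nlinarith [Real.exp_pos (G t), h1]
end

section
/- Let λ > 1, j0 ∈ ℤ, and let (a_j)_{j ≥ j0} be real-valued differentiable functions on [0, ∞) satisfying the chain model, with a_j(t) ≥ 0 for all j and t ≥ 0. Assume that the tail energy E_{B(j)}(t) = Σ_{l ≥ j} a_l(t)² is finite for every t ≥ 0 and every j ≥ j0, and that for every t ≥ 0, ∫_0^t λ^{N+1} a_N(s)² a_{N+1}(s) ds → 0 as N → ∞. Then for every j > j0 and all 0 ≤ t1 ≤ t2: E_{B(j)}(t2) − E_{B(j)}(t1) = 2 λ^j ∫_{t1}^{t2} a_{j-1}(s)² a_j(s) ds ≥ 0; in particular, t ↦ E_{B(j)}(t) is nondecreasing, i.e. the energy flux is strictly toward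 higher wavenumbers. -/
/-- For the chain model
`da_j/dt = λ^j a_{j-1}² − λ^{j+1} a_j a_{j+1}` (`j > j0`),
`da_{j0}/dt = −λ^{j0+1} a_{j0} a_{j0+1}` with `λ > 1` and a nonnegative
solution whose tail energies `E_{B(j)}(t) = Σ_{l ≥ j} a_l(t)²` are finite,
and whose flux escaping to infinity vanishes, for every `j > j0` and
`0 ≤ t1 ≤ t2`:
`E_{B(j)}(t2) − E_{B(j)}(t1) = 2 λ^j ∫_{t1}^{t2} a_{j-1}² a_j ds ≥ 0`;
in particular `t ↦ E_{B(j)}(t)` is nondecreasing: the energy flux is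
strictly toward higher wavenumbers. -/
theorem chainModel_energy_flux_to_high_wavenumbers
    (lam : ℝ) (hlam : 1 < lam) (j0 : ℤ) (a : ℤ → ℝ → ℝ)
    (hchain : ∀ j : ℤ, j0 < j → ∀ t : ℝ, 0 ≤ t →
      HasDerivWithinAt (a j)
        (lam ^ j * (a (j - 1) t) ^ 2 - lam ^ (j + 1) * a j t * a (j + 1) t)
        (Set.Ici 0) t)
    (hchain0 : ∀ t : ℝ, 0 ≤ t →
      HasDerivWithinAt (a j0) (-(lam ^ (j0 + 1) * a j0 t * a (j0 + 1) t))
        (Set.Ici 0) t)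
    (hnonneg : ∀ j : ℤ, j0 ≤ j → ∀ t : ℝ, 0 ≤ t → 0 ≤ a j t)
    (E : ℤ → ℝ → ℝ)
    (hE : ∀ j : ℤ, ∀ t : ℝ, E j t = ∑' l : ℕ, (a (j + l) t) ^ 2)
    (hsum : ∀ j : ℤ, j0 ≤ j → ∀ t : ℝ, 0 ≤ t →
      Summable (fun l : ℕ => (a (j + l) t) ^ 2))
    (hflux : ∀ t : ℝ, 0 ≤ t →
      Filter.Tendsto
        (fun N : ℕ =>
          ∫ s in (0 : ℝ)..t,
            lam ^ (j0 + (N : ℤ) + 1) * (a (j0 + N) s) ^ 2 * a (j0 + N + 1) s)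
        Filter.atTop (nhds 0)) :
    ∀ j : ℤ, j0 < j → ∀ t1 t2 : ℝ, 0 ≤ t1 → t1 ≤ t2 →
      (E j t2 - E j t1
          = 2 * lam ^ j * ∫ s in t1..t2, (a (j - 1) s) ^ 2 * a j s) ∧
        E j t1 ≤ E j t2 := by
  intro j hj t1 t2 ht1 ht12
  have ht2 : (0:ℝ) ≤ t2 := ht1.trans ht12
  -- continuity of each a k on Ici 0
  have hcont : ∀ k : ℤ, j0 ≤ k → ContinuousOn (a k) (Set.Ici 0) := by
    intro k hk t ht
    rcases eq_or_lt_of_le hk with h | h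
    · subst h; exact (hchain0 t ht).continuousWithinAt
    · exact (hchain k h t ht).continuousWithinAt
  have hIcc : Set.Icc t1 t2 ⊆ Set.Ici (0:ℝ) := fun x hx => le_trans ht1 hx.1
  -- derivative of squares
  have hsq : ∀ k : ℤ, j0 < k → ∀ t : ℝ, 0 ≤ t →
      HasDerivWithinAt (fun t => a k t ^ 2)
        (2 * lam ^ k * a (k-1) t ^ 2 * a k t - 2 * lam ^ (k+1) * a k t ^ 2 * a (k+1) t)
        (Set.Ici 0) t := by
    intro k hk t ht
    have := (hchain k hk t ht).pow 2
    refine this.congr_deriv ?_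
    ring
  -- partial sums
  set S : ℕ → ℝ → ℝ := fun N t => ∑ l ∈ Finset.range (N+1), a (j + l) t ^ 2 with hSdef
  have hS : ∀ N : ℕ, ∀ t : ℝ, 0 ≤ t →
      HasDerivWithinAt (S N)
        (2 * lam ^ j * a (j-1) t ^ 2 * a j t
          - 2 * lam ^ (j + (N:ℤ) + 1) * a (j + (N:ℤ)) t ^ 2 * a (j + (N:ℤ) + 1) t)
        (Set.Ici 0) t := by
    intro N
    induction N with
    | zero =>
      intro t ht
      have h0 := hsq j hj t ht
      have hf : S 0 = fun t => a j t ^ 2 := by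
        funext t; simp [hSdef]
      rw [hf]
      convert h0 using 1
      push_cast; ring_nf
    | succ N ih =>
      intro t ht
      have h1 := (ih t ht).add (hsq (j + (N:ℤ) + 1) (by omega) t ht)
      have hfun : S (N+1) = fun t => S N t + a (j + (N:ℤ) + 1) t ^ 2 := by
        funext t
        simp [hSdef, Finset.sum_range_succ]
        ring_nf
      rw [hfun]
      refine h1.congr_deriv ?_
      have e1 : j + (N:ℤ) + 1 - 1 = j + (N:ℤ) := by ring
      rw [e1]
      push_cast; ring_nf
  -- continuity of the two integrand pieces on Icc t1 t2
  have hcG : ContinuousOn (fun s => 2 * lam ^ j * a (j-1) s ^ 2 * a j s) (Set.Icc t1 t2) :=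
    (continuousOn_const.mul (((hcont (j-1) (by omega)).mono hIcc).pow 2)).mul
      ((hcont j (by omega)).mono hIcc)
  have hcΦ : ∀ N : ℕ, ContinuousOn
      (fun s => 2 * lam ^ (j + (N:ℤ) + 1) * a (j + (N:ℤ)) s ^ 2 * a (j + (N:ℤ) + 1) s)
      (Set.Icc t1 t2) := fun N =>
    (continuousOn_const.mul (((hcont (j + (N:ℤ)) (by omega)).mono hIcc).pow 2)).mul
      ((hcont (j + (N:ℤ) + 1) (by omega)).mono hIcc)
  have hiG : IntervalIntegrable (fun s => 2 * lam ^ j * a (j-1) s ^ 2 * a j s)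
      MeasureTheory.volume t1 t2 := by
    apply ContinuousOn.intervalIntegrable
    rwa [Set.uIcc_of_le ht12]
  have hiΦ : ∀ N : ℕ, IntervalIntegrable
      (fun s => 2 * lam ^ (j + (N:ℤ) + 1) * a (j + (N:ℤ)) s ^ 2 * a (j + (N:ℤ) + 1) s)
      MeasureTheory.volume t1 t2 := by
    intro N
    apply ContinuousOn.intervalIntegrable
    rw [Set.uIcc_of_le ht12]
    exact hcΦ N
  -- FTC for each partial sum
  have key : ∀ N : ℕ, S N t2 - S N t1
      = (∫ s in t1..t2, 2 * lam ^ j * a (j-1) s ^ 2 * a j s)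
        - ∫ s in t1..t2, 2 * lam ^ (j + (N:ℤ) + 1) * a (j + (N:ℤ)) s ^ 2 * a (j + (N:ℤ) + 1) s := by
    intro N
    have hcS : ContinuousOn (S N) (Set.Icc t1 t2) := by
      apply continuousOn_finset_sum
      intro l _
      exact (((hcont (j + (l:ℤ)) (by omega)).mono hIcc).pow 2)
    have hftc := intervalIntegral.integral_eq_sub_of_hasDeriv_right_of_le ht12 hcS
      (fun x hx => (hS N x (le_trans ht1 hx.1.le)).mono
        (fun y hy => le_trans (le_trans ht1 hx.1.le) hy.le))
      ((hiG.sub (hiΦ N)))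
    rw [intervalIntegral.integral_sub hiG (hiΦ N)] at hftc
    linarith [hftc]
  -- limits of partial sums
  have hlim : ∀ t : ℝ, 0 ≤ t →
      Filter.Tendsto (fun N => S N t) Filter.atTop (nhds (E j t)) := by
    intro t ht
    rw [hE]
    exact ((hsum j hj.le t ht).hasSum.tendsto_sum_nat).comp (Filter.tendsto_add_atTop_nat 1)
  -- flux on [t1, t2] tends to 0
  have hfluxI : Filter.Tendsto
      (fun N : ℕ => ∫ s in t1..t2,
        lam ^ (j0 + (N:ℤ) + 1) * (a (j0 + N) s) ^ 2 * a (j0 + N + 1) s)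
      Filter.atTop (nhds 0) := by
    have hint : ∀ (u : ℝ), 0 ≤ u → ∀ N : ℕ, IntervalIntegrable
        (fun s => lam ^ (j0 + (N:ℤ) + 1) * (a (j0 + N) s) ^ 2 * a (j0 + N + 1) s)
        MeasureTheory.volume 0 u := by
      intro u hu N
      apply ContinuousOn.intervalIntegrable
      rw [Set.uIcc_of_le hu]
      have h0u : Set.Icc (0:ℝ) u ⊆ Set.Ici 0 := Set.Icc_subset_Ici_self
      exact (continuousOn_const.mul (((hcont (j0 + (N:ℤ)) (by omega)).mono h0u).pow 2)).mul
        ((hcont (j0 + (N:ℤ) + 1) (by omega)).mono h0u)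
    have heq : ∀ N : ℕ, (∫ s in t1..t2,
        lam ^ (j0 + (N:ℤ) + 1) * (a (j0 + N) s) ^ 2 * a (j0 + N + 1) s)
        = (∫ s in (0:ℝ)..t2, lam ^ (j0 + (N:ℤ) + 1) * (a (j0 + N) s) ^ 2 * a (j0 + N + 1) s)
          - ∫ s in (0:ℝ)..t1, lam ^ (j0 + (N:ℤ) + 1) * (a (j0 + N) s) ^ 2 * a (j0 + N + 1) s := by
      intro N
      rw [intervalIntegral.integral_interval_sub_left (hint t2 ht2 N) (hint t1 ht1 N)]
    have := (hflux t2 ht2).sub (hflux t1 ht1)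
    rw [sub_zero] at this
    exact Filter.Tendsto.congr (fun N => (heq N).symm) this
  -- shifted flux tends to 0
  obtain ⟨k, hk⟩ : ∃ k : ℕ, j = j0 + (k:ℤ) := ⟨(j - j0).toNat, by omega⟩
  have hshift : Filter.Tendsto
      (fun N : ℕ => ∫ s in t1..t2,
        lam ^ (j + (N:ℤ) + 1) * (a (j + (N:ℤ)) s) ^ 2 * a (j + (N:ℤ) + 1) s)
      Filter.atTop (nhds 0) := by
    have hcomp := hfluxI.comp (Filter.tendsto_add_atTop_nat k)
    refine Filter.Tendsto.congr (fun N => ?_) hcomp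
    simp only [Function.comp_apply]
    rw [show j0 + ((N + k : ℕ) : ℤ) = j + (N:ℤ) from by push_cast; omega]
  -- combine
  have hR : Filter.Tendsto (fun N => S N t2 - S N t1) Filter.atTop
      (nhds ((∫ s in t1..t2, 2 * lam ^ j * a (j-1) s ^ 2 * a j s) - 2 * 0)) := by
    have h2 : ∀ N : ℕ, (∫ s in t1..t2,
        2 * lam ^ (j + (N:ℤ) + 1) * a (j + (N:ℤ)) s ^ 2 * a (j + (N:ℤ) + 1) s)
        = 2 * ∫ s in t1..t2,
            lam ^ (j + (N:ℤ) + 1) * (a (j + (N:ℤ)) s) ^ 2 * a (j + (N:ℤ) + 1) s := by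
      intro N
      rw [← intervalIntegral.integral_const_mul]
      congr 1; funext s; ring
    have : Filter.Tendsto (fun N : ℕ => (∫ s in t1..t2, 2 * lam ^ j * a (j-1) s ^ 2 * a j s)
        - 2 * ∫ s in t1..t2,
            lam ^ (j + (N:ℤ) + 1) * (a (j + (N:ℤ)) s) ^ 2 * a (j + (N:ℤ) + 1) s)
        Filter.atTop
        (nhds ((∫ s in t1..t2, 2 * lam ^ j * a (j-1) s ^ 2 * a j s) - 2 * 0)) :=
      Filter.Tendsto.sub tendsto_const_nhds (Filter.Tendsto.const_mul 2 hshift)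
    refine Filter.Tendsto.congr (fun N => ?_) this
    rw [key N, h2 N]
  have hL : Filter.Tendsto (fun N => S N t2 - S N t1) Filter.atTop
      (nhds (E j t2 - E j t1)) := (hlim t2 ht2).sub (hlim t1 ht1)
  have hmain : E j t2 - E j t1 = ∫ s in t1..t2, 2 * lam ^ j * a (j-1) s ^ 2 * a j s := by
    have := tendsto_nhds_unique hL hR
    rw [this]; ring
  have hfinal : E j t2 - E j t1 = 2 * lam ^ j * ∫ s in t1..t2, (a (j - 1) s) ^ 2 * a j s := by
    rw [hmain, ← intervalIntegral.integral_const_mul]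
    congr 1; funext s; ring
  refine ⟨hfinal, ?_⟩
  have hint_nonneg : 0 ≤ ∫ s in t1..t2, (a (j - 1) s) ^ 2 * a j s := by
    apply intervalIntegral.integral_nonneg ht12
    intro u hu
    have hu0 : (0:ℝ) ≤ u := le_trans ht1 hu.1
    exact mul_nonneg (sq_nonneg _) (hnonneg j hj.le u hu0)
  have hlamj : (0:ℝ) < lam ^ j := zpow_pos (by linarith) j
  nlinarith [hfinal, hint_nonneg, hlamj]
end

section
/- Let f : ℝ → ℝ be continuously differentiable, T > 0 and δ > 0 such that 1 + t f'(η) ≥ δ for all η ∈ ℝ and t ∈ [0, T). Then for each t ∈ [0, T) the map g_t(η) = η + t f(η) is a bijection of ℝ onto ℝ, and the function u(x, t) = f(g_t^{-1}(x)) — i.e. the function defined implicitly by u = f(η), x = η + t f(η) — is differentiable on ℝ × (0, T), satisfies the inviscid Burgers equation ∂u/∂t + u ∂u/∂x = 0, and satisfies the initial condition u(x, 0) = f(x). -/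
open Filter Topology

/-- Auxiliary linear equivalence `(a,b) ↦ (c*a + d*b, b)` for `c ≠ 0`. -/
noncomputable def shearEquiv (c d : ℝ) (hc : c ≠ 0) : (ℝ × ℝ) ≃L[ℝ] (ℝ × ℝ) :=
  LinearEquiv.toContinuousLinearEquiv
    { toFun := fun p => (c * p.1 + d * p.2, p.2)
      invFun := fun p => ((p.1 - d * p.2) / c, p.2)
      map_add' := by intro p q; refine Prod.ext ?_ ?_ <;> simp <;> ring
      map_smul' := by intro r p; refine Prod.ext ?_ ?_ <;> simp <;> ring
      left_inv := by intro p; refine Prod.ext ?_ ?_ <;> simp <;> field_simp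
      right_inv := by intro p; refine Prod.ext ?_ ?_ <;> simp <;> field_simp <;> ring }

lemma shearEquiv_apply (c d : ℝ) (hc : c ≠ 0) (p : ℝ × ℝ) :
    (shearEquiv c d hc : (ℝ × ℝ) →L[ℝ] (ℝ × ℝ)) p = (c * p.1 + d * p.2, p.2) := rfl

lemma shearEquiv_symm_apply (c d : ℝ) (hc : c ≠ 0) (p : ℝ × ℝ) :
    ((shearEquiv c d hc).symm : (ℝ × ℝ) →L[ℝ] (ℝ × ℝ)) p = ((p.1 - d * p.2) / c, p.2) := rfl

/-- Let `f` be `C¹`, `T > 0`, `δ > 0` with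
`1 + t f'(η) ≥ δ` for all `η ∈ ℝ`, `t ∈ [0,T)`. Then for each `t ∈ [0,T)`
the map `g_t(η) = η + t f(η)` is a bijection of `ℝ`, and the function `u`
defined implicitly by `u = f(η)`, `x = η + t f(η)` is differentiable on
`ℝ × (0,T)`, satisfies the inviscid Burgers equation
`∂u/∂t + u ∂u/∂x = 0` there, and satisfies `u(x,0) = f(x)`. -/
theorem burgers_method_of_characteristics
    (f : ℝ → ℝ) (hf : ContDiff ℝ 1 f) (T δ : ℝ) (hT : 0 < T) (hδ : 0 < δ)
    (hmono : ∀ η : ℝ, ∀ t ∈ Set.Ico (0 : ℝ) T, δ ≤ 1 + t * deriv f η) :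
    (∀ t ∈ Set.Ico (0 : ℝ) T, Function.Bijective fun η => η + t * f η) ∧
    ∀ u : ℝ → ℝ → ℝ,
      (∀ x : ℝ, ∀ t ∈ Set.Ico (0 : ℝ) T, ∀ η : ℝ,
        x = η + t * f η → u x t = f η) →
      DifferentiableOn ℝ (fun p : ℝ × ℝ => u p.1 p.2)
          (Set.univ ×ˢ Set.Ioo 0 T) ∧
        (∀ x : ℝ, ∀ t ∈ Set.Ioo (0 : ℝ) T,
          deriv (fun s => u x s) t + u x t * deriv (fun y => u y t) x = 0) ∧
        (∀ x : ℝ, u x 0 = f x) := by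
  have hfd : Differentiable ℝ f := hf.differentiable one_ne_zero
  -- Part 1: bijectivity of g_t
  have hbij : ∀ t ∈ Set.Ico (0 : ℝ) T, Function.Bijective fun η => η + t * f η := by
    intro t ht
    set g : ℝ → ℝ := fun η => η + t * f η with hg
    have hgd : ∀ η, HasDerivAt g (1 + t * deriv f η) η := by
      intro η
      exact (hasDerivAt_id' η).add (((hfd η).hasDerivAt).const_mul t)
    have hderiv : ∀ η, deriv g η = 1 + t * deriv f η := fun η => (hgd η).deriv
    have hpos : ∀ η, 0 < deriv g η := fun η =>
      (hderiv η) ▸ lt_of_lt_of_le hδ (hmono η t ht)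
    have hsm : StrictMono g := strictMono_of_deriv_pos hpos
    have hgdiff : Differentiable ℝ g := fun η => (hgd η).differentiableAt
    -- growth bounds
    have hmon : Monotone fun η => g η - δ * η := by
      apply monotone_of_deriv_nonneg
      · exact hgdiff.sub ((differentiable_id.const_mul δ))
      · intro η
        have hD : deriv (fun η => g η - δ * η) η = 1 + t * deriv f η - δ := by
          have := ((hgd η).sub ((hasDerivAt_id' η).const_mul δ)).deriv; rw [mul_one] at this; exact this
        rw [hD]
        have := hmono η t ht; linarith
    have htop : Tendsto g atTop atTop := by
      apply tendsto_atTop_mono' _ _ (tendsto_atTop_add_const_right _ (g 0 - δ * 0)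
        ((tendsto_id.const_mul_atTop hδ)))
      filter_upwards [eventually_ge_atTop (0 : ℝ)] with η hη
      have := hmon (show (0:ℝ) ≤ η from hη)
      simp only [id] at *
      linarith
    have hbot : Tendsto g atBot atBot := by
      apply tendsto_atBot_mono' _ _ (tendsto_atBot_add_const_right _ (g 0 - δ * 0)
        ((tendsto_id.const_mul_atBot hδ)))
      filter_upwards [eventually_le_atBot (0 : ℝ)] with η hη
      have := hmon (show η ≤ (0:ℝ) from hη)
      simp only [id] at *
      linarith
    exact ⟨hsm.injective, hgdiff.continuous.surjective htop hbot⟩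
  refine ⟨hbij, ?_⟩
  intro u hu
  -- key pointwise analysis
  have key : ∀ x : ℝ, ∀ t ∈ Set.Ioo (0 : ℝ) T, ∃ η : ℝ,
      0 < 1 + t * deriv f η ∧ u x t = f η ∧
      DifferentiableAt ℝ (fun p : ℝ × ℝ => u p.1 p.2) (x, t) ∧
      HasDerivAt (fun s => u x s)
        (deriv f η * ((0 - f η * 1) / (1 + t * deriv f η))) t ∧
      HasDerivAt (fun y => u y t)
        (deriv f η * ((1 - f η * 0) / (1 + t * deriv f η))) x := by
    intro x t ht
    have ht' : t ∈ Set.Ico (0 : ℝ) T := ⟨ht.1.le, ht.2⟩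
    obtain ⟨η, hη⟩ := (hbij t ht').2 x
    simp only at hη
    set c : ℝ := 1 + t * deriv f η with hc_def
    have hc : 0 < c := lt_of_lt_of_le hδ (hmono η t ht')
    set Φ : ℝ × ℝ → ℝ × ℝ := fun p => (p.1 + p.2 * f p.1, p.2) with hΦdef
    have hΦc : ContDiff ℝ 1 Φ :=
      ((contDiff_fst.add (contDiff_snd.mul (hf.comp contDiff_fst))).prodMk contDiff_snd)
    set A : (ℝ × ℝ) ≃L[ℝ] (ℝ × ℝ) := shearEquiv c (f η) hc.ne' with hA
    have hfd1 : HasFDerivAt Φ (A : (ℝ × ℝ) →L[ℝ] (ℝ × ℝ)) (η, t) := by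
      have h1 : HasFDerivAt (fun p : ℝ × ℝ => f p.1)
          ((deriv f η) • (ContinuousLinearMap.fst ℝ ℝ ℝ)) (η, t) :=
        ((hfd η).hasDerivAt).comp_hasFDerivAt _ (hasFDerivAt_fst)
      have h2 := (hasFDerivAt_snd (𝕜 := ℝ) (E := ℝ) (F := ℝ) (p := (η, t))).mul h1
      have h3 := (hasFDerivAt_fst (𝕜 := ℝ) (E := ℝ) (F := ℝ) (p := (η, t))).add h2
      have h4 := h3.prodMk (hasFDerivAt_snd (𝕜 := ℝ) (E := ℝ) (F := ℝ) (p := (η, t)))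
      refine h4.congr_fderiv ?_
      symm
      apply ContinuousLinearMap.ext
      intro v
      simp [hA, shearEquiv_apply, hc_def, Prod.ext_iff]
      ring
    have hstrict : HasStrictFDerivAt Φ (A : (ℝ × ℝ) →L[ℝ] (ℝ × ℝ)) (η, t) :=
      hΦc.contDiffAt.hasStrictFDerivAt' hfd1 one_ne_zero
    have hΦa : Φ (η, t) = (x, t) := by
      simp only [hΦdef]
      exact Prod.ext (by simpa using hη) rfl
    set ginv := hstrict.localInverse Φ A (η, t) with hginv_def
    have hga : ginv (x, t) = (η, t) := by
      rw [← hΦa]; exact hstrict.localInverse_apply_image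
    have hginv : HasStrictFDerivAt ginv
        ((A.symm : (ℝ × ℝ) →L[ℝ] (ℝ × ℝ))) (x, t) := by
      rw [← hΦa]; exact hstrict.to_localInverse
    have hev : ∀ᶠ q in 𝓝 (x, t), Φ (ginv q) = q := by
      have := hstrict.eventually_right_inverse
      rwa [hΦa] at this
    have hevt : ∀ᶠ q : ℝ × ℝ in 𝓝 (x, t), q.2 ∈ Set.Ioo (0 : ℝ) T :=
      continuous_snd.continuousAt.preimage_mem_nhds (Ioo_mem_nhds ht.1 ht.2)
    have heq : (fun p : ℝ × ℝ => u p.1 p.2) =ᶠ[𝓝 (x, t)]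
        fun q => f ((ginv q).1) := by
      filter_upwards [hev, hevt] with q hq1 hq2
      obtain ⟨h1, h2⟩ := Prod.ext_iff.mp hq1
      simp only [hΦdef] at h1 h2
      rw [h2] at h1
      exact hu q.1 q.2 ⟨hq2.1.le, hq2.2⟩ (ginv q).1 h1.symm
    have hF : HasFDerivAt (fun q : ℝ × ℝ => f ((ginv q).1))
        ((deriv f η) • ((ContinuousLinearMap.fst ℝ ℝ ℝ).comp
          (A.symm : (ℝ × ℝ) →L[ℝ] (ℝ × ℝ)))) (x, t) := by
      have hg1 : HasFDerivAt (fun q : ℝ × ℝ => (ginv q).1)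
          ((ContinuousLinearMap.fst ℝ ℝ ℝ).comp (A.symm : (ℝ × ℝ) →L[ℝ] (ℝ × ℝ)))
          (x, t) := hasFDerivAt_fst.comp _ hginv.hasFDerivAt
      have hd : HasDerivAt f (deriv f η) ((fun q : ℝ × ℝ => (ginv q).1) (x, t)) := by
        simp only [hga]; exact (hfd η).hasDerivAt
      exact HasDerivAt.comp_hasFDerivAt (x, t) hd hg1
    have hU : HasFDerivAt (fun p : ℝ × ℝ => u p.1 p.2)
        ((deriv f η) • ((ContinuousLinearMap.fst ℝ ℝ ℝ).comp
          (A.symm : (ℝ × ℝ) →L[ℝ] (ℝ × ℝ)))) (x, t) :=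
      hF.congr_of_eventuallyEq heq
    have huxt : u x t = f η := hu x t ht' η hη.symm
    refine ⟨η, hc, huxt, hU.differentiableAt, ?_, ?_⟩
    · have hγ : HasDerivAt (fun s : ℝ => ((x, s) : ℝ × ℝ)) ((0 : ℝ), (1 : ℝ)) t :=
        (hasDerivAt_const t x).prodMk (hasDerivAt_id t)
      have := hU.comp_hasDerivAt t hγ
      exact this.congr_deriv rfl
    · have hγ : HasDerivAt (fun y : ℝ => ((y, t) : ℝ × ℝ)) ((1 : ℝ), (0 : ℝ)) x :=
        (hasDerivAt_id x).prodMk (hasDerivAt_const x t)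
      have := hU.comp_hasDerivAt x hγ
      exact this.congr_deriv rfl
  refine ⟨?_, ?_, ?_⟩
  · intro p hp
    obtain ⟨η, _, _, hdiff, _, _⟩ := key p.1 p.2 hp.2
    exact hdiff.differentiableWithinAt
  · intro x t ht
    obtain ⟨η, hc, huxt, _, hdt, hdx⟩ := key x t ht
    rw [hdt.deriv, hdx.deriv, huxt]
    have hc' : (1 + t * deriv f η) ≠ 0 := hc.ne'
    field_simp
    ring
  · intro x
    exact hu x 0 ⟨le_rfl, hT⟩ x (by ring)
end
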